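/- arXiv:1011.6267 — 4 statements merged into one kernel-verified Lean document; each statement's English description precedes it below -/
import Mathlib

section
/- Let G be an X–Y normalized graph and let K ≠ N(X) be an important X–Y separator of G. Then K is a compound witness with respect to X, Y in G of rank at most excess(K). -/
variable {V : Type*}

/-- `K` is an `X`–`Y` separator of `G`: `K` avoids `X ∪ Y` and every walk
from a vertex of `X` to a vertex of `Y` meets `K` (i.e. there is no
`X`–`Y` path in `G \ K`). -/
def IsSeparator (G : SimpleGraph V) (X Y K : Set V) : Prop :=
  K ⊆ (X ∪ Y)ᶜ ∧
  ∀ x ∈ X, ∀ y ∈ Y, ∀ w : G.Walk x y, ∃ v ∈ w.support, v ∈ K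

/-- `NR G A B`: the vertices of `G \ B` that are not reachable from `A` in `G \ B`. -/
def NR (G : SimpleGraph V) (A B : Set V) : Set V :=
  {v | v ∉ B ∧ ¬ ∃ a ∈ A, ∃ w : G.Walk a v, ∀ x ∈ w.support, x ∉ B}

/-- `Reach G A B`: the vertices reachable from `A` in `G \ B`. -/
def Reach (G : SimpleGraph V) (A B : Set V) : Set V :=
  {v | ∃ a ∈ A, ∃ w : G.Walk a v, ∀ x ∈ w.support, x ∉ B}

/-- The order on `X`–`Y` separators: `K1 ≤ K2` iff `NR(G,Y,K1) ⊆ NR(G,Y,K2)`. -/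
def SepLE (G : SimpleGraph V) (Y K1 K2 : Set V) : Prop :=
  NR G Y K1 ⊆ NR G Y K2

/-- The strict order on `X`–`Y` separators. -/
def SepLT (G : SimpleGraph V) (Y K1 K2 : Set V) : Prop :=
  NR G Y K1 ⊆ NR G Y K2 ∧ NR G Y K1 ≠ NR G Y K2

/-- A minimal `X`–`Y` separator: no proper subset is an `X`–`Y` separator. -/
def IsMinimalSeparator (G : SimpleGraph V) (X Y K : Set V) : Prop :=
  IsSeparator G X Y K ∧ ∀ K' ⊂ K, ¬ IsSeparator G X Y K'

/-- An important `X`–`Y` separator: a minimal separator `K` such that there is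
no separator `K'` with `K < K'` and `|K'| ≤ |K|`. -/
def IsImportantSeparator (G : SimpleGraph V) (X Y K : Set V) : Prop :=
  IsMinimalSeparator G X Y K ∧
  ¬ ∃ K', IsSeparator G X Y K' ∧ SepLT G Y K K' ∧ K'.ncard ≤ K.ncard

/-- The minimum size of an `X`–`Y` separator of `G`. -/
noncomputable def minSepSize (G : SimpleGraph V) (X Y : Set V) : ℕ :=
  sInf {n | ∃ K, IsSeparator G X Y K ∧ K.ncard = n}

/-- The excess of a separator: its size minus the minimum separator size. -/
noncomputable def excess (G : SimpleGraph V) (X Y K : Set V) : ℕ :=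
  K.ncard - minSepSize G X Y

/-- The graph `Pr(G,X,Y,K)`: the vertices `NR(G,Y,K) \ X` are deleted (here:
made isolated), and every vertex of `X` is made adjacent to every vertex of `K`. -/
def PrGraph (G : SimpleGraph V) (X Y K : Set V) : SimpleGraph V where
  Adj u v := u ≠ v ∧ u ∉ NR G Y K \ X ∧ v ∉ NR G Y K \ X ∧
    (G.Adj u v ∨ (u ∈ X ∧ v ∈ K) ∨ (u ∈ K ∧ v ∈ X))
  symm := by
    constructor
    rintro u v ⟨h1, h2, h3, h4⟩
    refine ⟨h1.symm, h3, h2, ?_⟩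
    rcases h4 with h | h | h
    · exact Or.inl h.symm
    · exact Or.inr (Or.inr ⟨h.2, h.1⟩)
    · exact Or.inr (Or.inl ⟨h.2, h.1⟩)
  loopless := by constructor; rintro v ⟨h1, -⟩; exact h1 rfl

/-- `NSet G X` is `N(X)`: the set of vertices outside `X` adjacent to a vertex of `X`. -/
def NSet (G : SimpleGraph V) (X : Set V) : Set V :=
  {v | v ∉ X ∧ ∃ x ∈ X, G.Adj x v}

/-- `G` is `X`–`Y` normalized: `N(X)` is an `X`–`Y` separator and is
the unique smallest `X`–`Y` separator. -/
def Normalized (G : SimpleGraph V) (X Y : Set V) : Prop :=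
  IsSeparator G X Y (NSet G X) ∧
  ∀ K, IsSeparator G X Y K → K ≠ NSet G X → (NSet G X).ncard < K.ncard

/-- The cover excess `CE(S)`: the minimum excess of an `X`–`Y` separator disjoint from `S`. -/
noncomputable def CE (G : SimpleGraph V) (X Y S : Set V) : ℕ :=
  sInf {n | ∃ K, IsSeparator G X Y K ∧ Disjoint K S ∧ excess G X Y K = n}

/-- A witness of `S`: an `X`–`Y` separator disjoint from `S` whose excess equals `CE(S)`. -/
noncomputable def IsWitness (G : SimpleGraph V) (X Y S K : Set V) : Prop :=
  IsSeparator G X Y K ∧ Disjoint K S ∧ excess G X Y K = CE G X Y S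

/-- An important witness of `S`: a witness of `S` that is an important `X`–`Y` separator. -/
noncomputable def IsImportantWitness (G : SimpleGraph V) (X Y S K : Set V) : Prop :=
  IsWitness G X Y S K ∧ IsImportantSeparator G X Y K

/-- Compound witnesses: `K` is a compound witness with attribute `(S1, …, Sr)`
(a list of sets) w.r.t. `X`, `Y` in `G`.  For `r = 1`: `S1 ⊆ N(X)`, no vertex of
`S1` is adjacent to `Y`, and `K` is the (unique) important witness of `S1`.
For `r > 1`: additionally `S2 ∪ … ∪ Sr` is disjoint from `N(X)` and `K` is a
compound witness with attribute `(S2, …, Sr)` w.r.t. `X`, `Y` in `Pr(G,X,Y,K(S1))`. -/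
inductive IsCompoundWitness (X Y : Set V) :
    SimpleGraph V → List (Set V) → Set V → Prop where
  | base (G : SimpleGraph V) (S1 K : Set V) :
      S1.Nonempty → S1 ⊆ NSet G X → (∀ s ∈ S1, ∀ y ∈ Y, ¬ G.Adj s y) →
      IsImportantWitness G X Y S1 K →
      IsCompoundWitness X Y G [S1] K
  | step (G : SimpleGraph V) (S1 : Set V) (rest : List (Set V)) (K K1 : Set V) :
      S1.Nonempty → S1 ⊆ NSet G X → (∀ s ∈ S1, ∀ y ∈ Y, ¬ G.Adj s y) →
      rest ≠ [] → (∀ S ∈ rest, Disjoint S (NSet G X)) →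
      IsImportantWitness G X Y S1 K1 →
      IsCompoundWitness X Y (PrGraph G X Y K1) rest K →
      IsCompoundWitness X Y G (S1 :: rest) K
section Aux1

open SimpleGraph

variable {V : Type*} {G : SimpleGraph V} {A B K X Y : Set V}

lemma mem_reach_self {a : V} (ha : a ∈ A) (hb : a ∉ B) : a ∈ Reach G A B :=
  ⟨a, ha, SimpleGraph.Walk.nil, by simpa using hb⟩

lemma reach_not_mem {v : V} (h : v ∈ Reach G A B) : v ∉ B := by
  obtain ⟨a, ha, w, hw⟩ := h; exact hw v w.end_mem_support

lemma mem_NR_iff {v : V} : v ∈ NR G A B ↔ v ∉ B ∧ v ∉ Reach G A B := Iff.rfl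

lemma NR_disj {v : V} (h : v ∈ NR G A B) : v ∉ B := h.1

lemma mem_reach_of_not_NR {v : V} (h1 : v ∉ B) (h2 : v ∉ NR G A B) : v ∈ Reach G A B := by
  by_contra hc; exact h2 ⟨h1, hc⟩

lemma NR_of_not_reach {v : V} (h1 : v ∉ B) (h2 : v ∉ Reach G A B) : v ∈ NR G A B := ⟨h1, h2⟩

lemma reach_adj {v u : V} (h : v ∈ Reach G A B) (hadj : G.Adj v u) (hu : u ∉ B) :
    u ∈ Reach G A B := by
  obtain ⟨a, ha, w, hw⟩ := h
  refine ⟨a, ha, w.concat hadj, ?_⟩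
  intro x hx
  rw [SimpleGraph.Walk.support_concat] at hx
  rcases List.mem_append.1 hx with h' | h'
  · exact hw x h'
  · rw [List.mem_singleton] at h'; subst h'; exact hu

lemma reach_walk {a v : V} (ha : a ∈ Reach G A B) (w : G.Walk a v)
    (hw : ∀ x ∈ w.support, x ∉ B) : v ∈ Reach G A B := by
  induction w with
  | nil => exact ha
  | cons h p ih =>
    refine ih (reach_adj ha h (hw _ ?_)) fun x hx => hw x ?_
    · rw [SimpleGraph.Walk.support_cons]; exact List.mem_cons_of_mem _ p.start_mem_support
    · rw [SimpleGraph.Walk.support_cons]; exact List.mem_cons_of_mem _ hx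

lemma sep_not_reach (hK : IsSeparator G X Y K) {x : V} (hx : x ∈ X) : x ∉ Reach G Y K := by
  rintro ⟨y, hy, w, hw⟩
  obtain ⟨v, hv, hvK⟩ := hK.2 x hx y hy w.reverse
  rw [SimpleGraph.Walk.support_reverse] at hv
  exact hw v (List.mem_reverse.1 hv) hvK

lemma sep_of (h1 : K ⊆ (X ∪ Y)ᶜ) (h2 : ∀ x ∈ X, x ∉ Reach G Y K) : IsSeparator G X Y K := by
  refine ⟨h1, fun x hx y hy w => ?_⟩
  by_contra hc; push_neg at hc
  refine h2 x hx (reach_walk (mem_reach_self hy fun hyK => h1 hyK (Or.inr hy)) w.reverse ?_)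
  intro v hv
  rw [SimpleGraph.Walk.support_reverse] at hv
  exact hc v (List.mem_reverse.1 hv)

lemma sep_not_mem_X (hK : IsSeparator G X Y K) {v : V} (hv : v ∈ K) : v ∉ X :=
  fun h => hK.1 hv (Or.inl h)

lemma sep_not_mem_Y (hK : IsSeparator G X Y K) {v : V} (hv : v ∈ K) : v ∉ Y :=
  fun h => hK.1 hv (Or.inr h)

lemma X_sub_NR (hK : IsSeparator G X Y K) : X ⊆ NR G Y K := fun x hx =>
  ⟨fun h => hK.1 h (Or.inl hx), sep_not_reach hK hx⟩

lemma nset_sub_NR (hK : IsSeparator G X Y K) {v : V} (hv : v ∈ NSet G X) (hvK : v ∉ K) :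
    v ∈ NR G Y K := by
  refine ⟨hvK, fun hr => ?_⟩
  obtain ⟨-, x, hx, hadj⟩ := hv
  exact sep_not_reach hK hx (reach_adj hr hadj.symm fun h => hK.1 h (Or.inl hx))

lemma reachX_sub_NR (hK : IsSeparator G X Y K) {v : V} (h : v ∈ Reach G X K) :
    v ∈ NR G Y K := by
  refine ⟨reach_not_mem h, fun hr => ?_⟩
  obtain ⟨x, hx, w, hw⟩ := h
  refine sep_not_reach hK hx (reach_walk hr w.reverse ?_)
  intro u hu; rw [SimpleGraph.Walk.support_reverse] at hu
  exact hw u (List.mem_reverse.1 hu)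

lemma exists_nset_of_walk {R : Set V} {u v : V} (w : G.Walk u v) (hu : u ∈ R) (hv : v ∉ R) :
    ∃ z ∈ w.support, z ∈ NSet G R := by
  induction w with
  | nil => exact absurd hu hv
  | @cons a b c h p ih =>
    by_cases hb : b ∈ R
    · obtain ⟨z, hz, hz2⟩ := ih hb hv
      refine ⟨z, ?_, hz2⟩
      rw [SimpleGraph.Walk.support_cons]; exact List.mem_cons_of_mem _ hz
    · refine ⟨b, ?_, hb, a, hu, h⟩
      rw [SimpleGraph.Walk.support_cons]
      exact List.mem_cons_of_mem _ p.start_mem_support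

lemma support_sub_reach {a b : V} (w : G.Walk a b) (ha : a ∈ Reach G A B)
    (hw : ∀ x ∈ w.support, x ∉ B) : ∀ u ∈ w.support, u ∈ Reach G A B := by
  induction w with
  | nil => intro u hu; rw [SimpleGraph.Walk.support_nil] at hu; simp at hu; subst hu; exact ha
  | @cons x y z h p ih =>
    intro u hu
    rw [SimpleGraph.Walk.support_cons] at hu
    rcases List.mem_cons.1 hu with rfl | hu'
    · exact ha
    · have hy : y ∈ Reach G A B := reach_adj ha h (hw y (by
        rw [SimpleGraph.Walk.support_cons]; exact List.mem_cons_of_mem _ p.start_mem_support))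
      exact ih hy (fun x hx => hw x (by
        rw [SimpleGraph.Walk.support_cons]; exact List.mem_cons_of_mem _ hx)) u hu'

lemma exists_first_cross {C : Set V} {a b : V} (w : G.Walk a b) (ha : a ∉ C) (hb : b ∈ C) :
    ∃ u c, u ∉ C ∧ c ∈ C ∧ G.Adj u c ∧
      ∃ p : G.Walk a u, (∀ v ∈ p.support, v ∉ C) ∧ (∀ v ∈ p.support, v ∈ w.support) ∧
        c ∈ w.support := by
  induction w with
  | nil => exact absurd hb ha
  | @cons x y z h p ih =>
    by_cases hy : y ∈ C
    · refine ⟨x, y, ha, hy, h, SimpleGraph.Walk.nil, by simpa using ha, by simp, ?_⟩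
      rw [SimpleGraph.Walk.support_cons]
      exact List.mem_cons_of_mem _ p.start_mem_support
    · obtain ⟨u, c, hu, hc, hadj, q, hq1, hq2, hq3⟩ := ih hy hb
      refine ⟨u, c, hu, hc, hadj, SimpleGraph.Walk.cons h q, ?_, ?_, ?_⟩
      · intro v hv
        rw [SimpleGraph.Walk.support_cons] at hv
        rcases List.mem_cons.1 hv with rfl | hv'
        · exact ha
        · exact hq1 v hv'
      · intro v hv
        rw [SimpleGraph.Walk.support_cons] at hv ⊢
        rcases List.mem_cons.1 hv with rfl | hv'
        · exact List.mem_cons_self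
        · exact List.mem_cons_of_mem _ (hq2 v hv')
      · rw [SimpleGraph.Walk.support_cons]
        exact List.mem_cons_of_mem _ hq3

lemma exists_adj_of_mem_support {x y v : V} (w : G.Walk x y) (hv : v ∈ w.support)
    (hne : v ≠ x) : ∃ u, G.Adj u v := by
  induction w with
  | nil => rw [SimpleGraph.Walk.support_nil] at hv; simp at hv; exact absurd hv hne
  | @cons a b c h p ih =>
    rw [SimpleGraph.Walk.support_cons] at hv
    rcases List.mem_cons.1 hv with rfl | hv'
    · exact absurd rfl hne
    · by_cases hvb : v = b
      · subst hvb; exact ⟨a, h⟩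
      · exact ih hv' hvb

lemma exists_adj_reach_of_unique {v : V} : ∀ {a y : V} (w : G.Walk a y),
    a ∈ Reach G X K → (∀ u ∈ w.support, u ∈ K → u = v) → v ∈ w.support → v ∈ K →
    ∃ u, G.Adj u v ∧ u ∈ Reach G X K := by
  intro a y w
  induction w with
  | nil =>
    intro ha _ hv hvK
    rw [SimpleGraph.Walk.support_nil] at hv; simp at hv; subst hv
    exact absurd hvK (reach_not_mem ha)
  | @cons x d z h p ih =>
    intro ha huniq hv hvK
    rw [SimpleGraph.Walk.support_cons] at hv
    rcases List.mem_cons.1 hv with rfl | hv'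
    · exact absurd hvK (reach_not_mem ha)
    · by_cases hd : d = v
      · subst hd; exact ⟨x, h, ha⟩
      · have hdK : d ∉ K := fun hdK => hd (huniq d (by
          rw [SimpleGraph.Walk.support_cons]
          exact List.mem_cons_of_mem _ p.start_mem_support) hdK)
        exact ih (reach_adj ha h hdK) (fun u hu => huniq u (by
          rw [SimpleGraph.Walk.support_cons]; exact List.mem_cons_of_mem _ hu)) hv' hvK

lemma minimal_sep_walk (hK : IsMinimalSeparator G X Y K) {v : V} (hv : v ∈ K) :
    ∃ x ∈ X, ∃ y ∈ Y, ∃ w : G.Walk x y, (∀ u ∈ w.support, u ∈ K → u = v) ∧ v ∈ w.support := by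
  have hss : K \ {v} ⊂ K := Set.sdiff_singleton_ssubset.2 hv
  have hns := hK.2 _ hss
  rw [IsSeparator, not_and] at hns
  have h1 : K \ {v} ⊆ (X ∪ Y)ᶜ := fun u hu => hK.1.1 hu.1
  push_neg at hns
  obtain ⟨x, hx, y, hy, w, hw⟩ := hns h1
  have huniq : ∀ u ∈ w.support, u ∈ K → u = v := by
    intro u hu huK
    have := hw u hu
    simp only [Set.mem_diff, Set.mem_singleton_iff, not_and, not_not] at this
    exact this huK
  obtain ⟨u, hu, huK⟩ := hK.1.2 x hx y hy w
  exact ⟨x, hx, y, hy, w, huniq, (huniq u hu huK) ▸ hu⟩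

lemma minimal_sep_adj (hK : IsMinimalSeparator G X Y K) {v : V} (hv : v ∈ K) :
    ∃ u, G.Adj v u := by
  obtain ⟨x, hx, y, hy, w, huniq, hvs⟩ := minimal_sep_walk hK hv
  obtain ⟨u, hu⟩ := exists_adj_of_mem_support w hvs
    (fun h => hK.1.1 hv (Or.inl (h ▸ hx)))
  exact ⟨u, hu.symm⟩

lemma minimal_sep_exists_adj_reach (hK : IsMinimalSeparator G X Y K) {v : V} (hv : v ∈ K) :
    ∃ u, G.Adj u v ∧ u ∈ Reach G X K := by
  obtain ⟨x, hx, y, hy, w, huniq, hvs⟩ := minimal_sep_walk hK hv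
  exact exists_adj_reach_of_unique w
    (mem_reach_self hx fun h => hK.1.1 h (Or.inl hx)) huniq hvs hv

lemma minimal_sep_nset_NR (hK : IsMinimalSeparator G X Y K) :
    NSet G (NR G Y K) = K := by
  ext z
  constructor
  · rintro ⟨hz1, u, hu, hadj⟩
    by_contra hzK
    exact hu.2 (reach_adj (mem_reach_of_not_NR hzK hz1) hadj.symm hu.1)
  · intro hzK
    obtain ⟨u, hadj, hu⟩ := minimal_sep_exists_adj_reach hK hzK
    exact ⟨fun h => h.1 hzK, u, reachX_sub_NR hK.1 hu, hadj⟩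

end Aux1
section Aux2

variable {V : Type*} {G : SimpleGraph V} {X Y K J K0 K1 K2 A B S P : Set V}

lemma frontier_sep {R : Set V} (hX : X ⊆ R) (hY : ∀ y ∈ Y, y ∉ R ∧ y ∉ NSet G R) :
    IsSeparator G X Y (NSet G R) := by
  refine ⟨fun v hv => ?_, fun x hx y hy w => exists_nset_of_walk w (hX hx) (hY y hy).1⟩
  rintro (h | h)
  · exact hv.1 (hX h)
  · exact (hY v h).2 hv

lemma sub_NR_frontier {R : Set V} (hY : ∀ y ∈ Y, y ∉ R ∧ y ∉ NSet G R) :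
    R ⊆ NR G Y (NSet G R) := by
  intro v hv
  refine ⟨fun h => h.1 hv, ?_⟩
  rintro ⟨y, hy, w, hw⟩
  obtain ⟨z, hz, hz2⟩ := exists_nset_of_walk w.reverse hv (hY y hy).1
  rw [SimpleGraph.Walk.support_reverse] at hz
  exact hw z (List.mem_reverse.1 hz) hz2

lemma Y_notin_NR (hJ : IsSeparator G X Y J) {y : V} (hy : y ∈ Y) : y ∉ NR G Y J :=
  fun h => h.2 (mem_reach_self hy h.1)

lemma Y_notin_nset_of_sub_NR (hJ1 : IsSeparator G X Y K1) (hJ2 : IsSeparator G X Y K2)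
    {R : Set V} (hR : R ⊆ NR G Y K1 ∪ NR G Y K2) {y : V} (hy : y ∈ Y) : y ∉ NSet G R := by
  rintro ⟨hyR, u, hu, hadj⟩
  rcases hR hu with h | h
  · exact h.2 (reach_adj (mem_reach_self hy fun hyJ => hJ1.1 hyJ (Or.inr hy)) hadj.symm h.1)
  · exact h.2 (reach_adj (mem_reach_self hy fun hyJ => hJ2.1 hyJ (Or.inr hy)) hadj.symm h.1)

lemma Y_cond_union (hJ1 : IsSeparator G X Y K1) (hJ2 : IsSeparator G X Y K2) :
    ∀ y ∈ Y, y ∉ (NR G Y K1 ∪ NR G Y K2) ∧ y ∉ NSet G (NR G Y K1 ∪ NR G Y K2) := by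
  intro y hy
  exact ⟨fun h => h.elim (Y_notin_NR hJ1 hy) (Y_notin_NR hJ2 hy),
    Y_notin_nset_of_sub_NR hJ1 hJ2 subset_rfl hy⟩

lemma Y_cond_inter (hJ1 : IsSeparator G X Y K1) (hJ2 : IsSeparator G X Y K2) :
    ∀ y ∈ Y, y ∉ (NR G Y K1 ∩ NR G Y K2) ∧ y ∉ NSet G (NR G Y K1 ∩ NR G Y K2) := by
  intro y hy
  refine ⟨fun h => Y_notin_NR hJ1 hy h.1,
    Y_notin_nset_of_sub_NR hJ1 hJ2 (fun v hv => Or.inl hv.1) hy⟩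

lemma nset_inter_union_sub {R1 R2 : Set V} :
    NSet G (R1 ∩ R2) ∪ NSet G (R1 ∪ R2) ⊆ NSet G R1 ∪ NSet G R2 := by
  rintro v (⟨hv, u, ⟨hu1, hu2⟩, hadj⟩ | ⟨hv, u, hu, hadj⟩)
  · by_cases h1 : v ∈ R1
    · exact Or.inr ⟨fun h2 => hv ⟨h1, h2⟩, u, hu2, hadj⟩
    · exact Or.inl ⟨h1, u, hu1, hadj⟩
  · rcases hu with hu | hu
    · exact Or.inl ⟨fun h => hv (Or.inl h), u, hu, hadj⟩
    · exact Or.inr ⟨fun h => hv (Or.inr h), u, hu, hadj⟩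

lemma nset_inter_union_inf {R1 R2 : Set V} :
    NSet G (R1 ∩ R2) ∩ NSet G (R1 ∪ R2) ⊆ NSet G R1 ∩ NSet G R2 := by
  rintro v ⟨⟨-, u, ⟨hu1, hu2⟩, hadj⟩, ⟨hv, -⟩⟩
  exact ⟨⟨fun h => hv (Or.inl h), u, hu1, hadj⟩, ⟨fun h => hv (Or.inr h), u, hu2, hadj⟩⟩

variable [Fintype V]

lemma nset_submod (R1 R2 : Set V) :
    (NSet G (R1 ∩ R2)).ncard + (NSet G (R1 ∪ R2)).ncard
      ≤ (NSet G R1).ncard + (NSet G R2).ncard := by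
  have h1 := Set.ncard_union_add_ncard_inter (NSet G (R1 ∩ R2)) (NSet G (R1 ∪ R2))
    (Set.toFinite _) (Set.toFinite _)
  have h2 := Set.ncard_union_add_ncard_inter (NSet G R1) (NSet G R2)
    (Set.toFinite _) (Set.toFinite _)
  have h3 := Set.ncard_le_ncard (nset_inter_union_sub (G := G) (R1 := R1) (R2 := R2))
    (Set.toFinite _)
  have h4 := Set.ncard_le_ncard (nset_inter_union_inf (G := G) (R1 := R1) (R2 := R2))
    (Set.toFinite _)
  omega

lemma minSep_le (hK : IsSeparator G X Y K) : minSepSize G X Y ≤ K.ncard :=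
  Nat.sInf_le ⟨K, hK, rfl⟩

lemma normalized_minSep (h : Normalized G X Y) : minSepSize G X Y = (NSet G X).ncard := by
  refine le_antisymm (minSep_le h.1) (le_csInf ⟨_, NSet G X, h.1, rfl⟩ ?_)
  rintro n ⟨K', hK', rfl⟩
  by_cases hne : K' = NSet G X
  · simp [hne]
  · exact (h.2 K' hK' hne).le

lemma normalized_card_lt (h : Normalized G X Y) (hK : IsSeparator G X Y K)
    (hne : K ≠ NSet G X) : minSepSize G X Y < K.ncard := by
  rw [normalized_minSep h]; exact h.2 K hK hne

lemma CE_le (hJ : IsSeparator G X Y J) (hdisj : Disjoint J S) :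
    CE G X Y S ≤ excess G X Y J := Nat.sInf_le ⟨J, hJ, hdisj, rfl⟩

lemma exists_witness (h : ∃ J, IsSeparator G X Y J ∧ Disjoint J S) :
    ∃ J, IsWitness G X Y S J := by
  obtain ⟨J, h1, h2⟩ := h
  have hne : {n | ∃ K, IsSeparator G X Y K ∧ Disjoint K S ∧ excess G X Y K = n}.Nonempty :=
    ⟨_, J, h1, h2, rfl⟩
  obtain ⟨K', hK', hd, he⟩ := Nat.sInf_mem hne
  exact ⟨K', hK', hd, he⟩

lemma witness_minimal (hW : IsWitness G X Y S K) : IsMinimalSeparator G X Y K := by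
  refine ⟨hW.1, fun K' hss hsep => ?_⟩
  have h1 : Disjoint K' S := hW.2.1.mono_left hss.subset
  have h2 : CE G X Y S ≤ excess G X Y K' := CE_le hsep h1
  have h3 : K'.ncard < K.ncard := Set.ncard_lt_ncard hss (Set.toFinite _)
  have h4 : minSepSize G X Y ≤ K'.ncard := minSep_le hsep
  have h5 := hW.2.2
  unfold excess at h2 h5
  omega

lemma exists_important_witness (hS : S ⊆ NSet G X)
    (hfeas : ∃ J, IsSeparator G X Y J ∧ Disjoint J S) :
    ∃ K1, IsImportantWitness G X Y S K1 ∧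
      ∀ J, IsWitness G X Y S J → (NR G Y J).ncard ≤ (NR G Y K1).ncard := by
  obtain ⟨J0, hJ0⟩ := exists_witness hfeas
  have hWne : {n | ∃ J, IsWitness G X Y S J ∧ (NR G Y J).ncard = n}.Nonempty := ⟨_, J0, hJ0, rfl⟩
  have hWbdd : BddAbove {n | ∃ J, IsWitness G X Y S J ∧ (NR G Y J).ncard = n} := by
    refine ⟨Fintype.card V, ?_⟩
    rintro n ⟨J, -, rfl⟩
    have := Set.ncard_le_ncard (Set.subset_univ (NR G Y J)) (Set.toFinite _)
    rwa [Set.ncard_univ, Nat.card_eq_fintype_card] at this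
  obtain ⟨K1, hK1, hcard⟩ := Nat.sSup_mem hWne hWbdd
  have hmax : ∀ J, IsWitness G X Y S J → (NR G Y J).ncard ≤ (NR G Y K1).ncard := by
    intro J hJ
    rw [hcard]
    exact le_csSup hWbdd ⟨J, hJ, rfl⟩
  refine ⟨K1, ⟨hK1, witness_minimal hK1, ?_⟩, hmax⟩
  rintro ⟨K', hsep', ⟨hsub, hne⟩, hcard'⟩
  have hdisj : Disjoint K' S := by
    rw [Set.disjoint_right]
    intro s hs
    have hs1 : s ∉ K1 := Set.disjoint_right.1 hK1.2.1 hs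
    have hs2 : s ∈ NR G Y K1 := nset_sub_NR hK1.1 (hS hs) hs1
    exact fun hsK' => (hsub hs2).1 hsK'
  have h2 : CE G X Y S ≤ excess G X Y K' := CE_le hsep' hdisj
  have h4 : minSepSize G X Y ≤ K'.ncard := minSep_le hsep'
  have h5 := hK1.2.2
  have h6 : excess G X Y K' ≤ excess G X Y K1 := by unfold excess; omega
  have hW' : IsWitness G X Y S K' := ⟨hsep', hdisj, by omega⟩
  have h7 := hmax K' hW'
  have h8 : (NR G Y K1).ncard < (NR G Y K').ncard :=
    Set.ncard_lt_ncard (ssubset_of_subset_of_ne hsub hne) (Set.toFinite _)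
  omega

lemma minimal_sub_of_NR_eq (hK1 : IsMinimalSeparator G X Y K1) (hK2 : IsSeparator G X Y K2)
    (hNR : NR G Y K1 = NR G Y K2) : K1 ⊆ K2 := by
  intro v hv
  by_contra hvK2
  obtain ⟨u, hadj, hu⟩ := minimal_sep_exists_adj_reach hK1 hv
  have huNR : u ∈ NR G Y K2 := hNR ▸ reachX_sub_NR hK1.1 hu
  have hvNR : v ∉ NR G Y K2 := fun h => (hNR ▸ h : v ∈ NR G Y K1).1 hv
  have hvR : v ∈ Reach G Y K2 := mem_reach_of_not_NR hvK2 hvNR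
  exact huNR.2 (reach_adj hvR hadj.symm huNR.1)

lemma minimal_eq_of_NR_eq (hK1 : IsMinimalSeparator G X Y K1) (hK2 : IsMinimalSeparator G X Y K2)
    (hNR : NR G Y K1 = NR G Y K2) : K1 = K2 :=
  Set.Subset.antisymm (minimal_sub_of_NR_eq hK1 hK2.1 hNR)
    (minimal_sub_of_NR_eq hK2 hK1.1 hNR.symm)

lemma CE_mono (hAB : A ⊆ B) (hfeas : ∃ J, IsSeparator G X Y J ∧ Disjoint J B) :
    CE G X Y A ≤ CE G X Y B := by
  obtain ⟨J, hJ⟩ := exists_witness hfeas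
  calc CE G X Y A ≤ excess G X Y J := CE_le hJ.1 (hJ.2.1.mono_right hAB)
  _ = CE G X Y B := hJ.2.2

lemma CE_submod (hA : A ⊆ NSet G X) (hB : B ⊆ NSet G X)
    (hfA : ∃ J, IsSeparator G X Y J ∧ Disjoint J A)
    (hfB : ∃ J, IsSeparator G X Y J ∧ Disjoint J B) :
    CE G X Y (A ∪ B) + CE G X Y (A ∩ B) ≤ CE G X Y A + CE G X Y B := by
  obtain ⟨KA, hKA⟩ := exists_witness hfA
  obtain ⟨KB, hKB⟩ := exists_witness hfB
  have hKAm := witness_minimal hKA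
  have hKBm := witness_minimal hKB
  set RA := NR G Y KA with hRA
  set RB := NR G Y KB with hRB
  have hsepU : IsSeparator G X Y (NSet G (RA ∪ RB)) :=
    frontier_sep (fun x hx => Or.inl (X_sub_NR hKA.1 hx)) (Y_cond_union hKA.1 hKB.1)
  have hsepI : IsSeparator G X Y (NSet G (RA ∩ RB)) :=
    frontier_sep (fun x hx => ⟨X_sub_NR hKA.1 hx, X_sub_NR hKB.1 hx⟩) (Y_cond_inter hKA.1 hKB.1)
  have hdU : Disjoint (NSet G (RA ∪ RB)) (A ∪ B) := by
    rw [Set.disjoint_right]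
    rintro s (hs | hs)
    · have : s ∈ RA := nset_sub_NR hKA.1 (hA hs) (Set.disjoint_right.1 hKA.2.1 hs)
      exact fun h => h.1 (Or.inl this)
    · have : s ∈ RB := nset_sub_NR hKB.1 (hB hs) (Set.disjoint_right.1 hKB.2.1 hs)
      exact fun h => h.1 (Or.inr this)
  have hdI : Disjoint (NSet G (RA ∩ RB)) (A ∩ B) := by
    rw [Set.disjoint_right]
    rintro s ⟨hsA, hsB⟩
    have h1 : s ∈ RA := nset_sub_NR hKA.1 (hA hsA) (Set.disjoint_right.1 hKA.2.1 hsA)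
    have h2 : s ∈ RB := nset_sub_NR hKB.1 (hB hsB) (Set.disjoint_right.1 hKB.2.1 hsB)
    exact fun h => h.1 ⟨h1, h2⟩
  have h1 : CE G X Y (A ∪ B) ≤ excess G X Y (NSet G (RA ∪ RB)) := CE_le hsepU hdU
  have h2 : CE G X Y (A ∩ B) ≤ excess G X Y (NSet G (RA ∩ RB)) := CE_le hsepI hdI
  have hsub := nset_submod (G := G) RA RB
  rw [minimal_sep_nset_NR hKAm, minimal_sep_nset_NR hKBm] at hsub
  have m1 := minSep_le hsepU
  have m2 := minSep_le hsepI
  have m3 := minSep_le hKA.1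
  have m4 := minSep_le hKB.1
  rw [← hKA.2.2, ← hKB.2.2]
  unfold excess at h1 h2 ⊢
  omega

end Aux2
section Aux3

variable {V : Type*} {G : SimpleGraph V} {X Y K J K1 S S1 P : Set V}

lemma nset_not_adj_Y (hK : IsSeparator G X Y K) {s : V} (hs : s ∈ NSet G X) (hsK : s ∉ K) :
    ∀ y ∈ Y, ¬ G.Adj s y := by
  intro y hy hadj
  obtain ⟨hsX, x, hx, hxs⟩ := hs
  obtain ⟨v, hv, hvK⟩ := hK.2 x hx y hy (SimpleGraph.Walk.cons hxs
    (SimpleGraph.Walk.cons hadj SimpleGraph.Walk.nil))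
  simp only [SimpleGraph.Walk.support_cons, SimpleGraph.Walk.support_nil,
    List.mem_cons, List.mem_singleton] at hv
  rcases hv with rfl | rfl | rfl | h
  · exact hK.1 hvK (Or.inl hx)
  · exact hsK hvK
  · exact hK.1 hvK (Or.inr hy)
  · exact absurd h List.not_mem_nil

lemma nset_diff_nonempty (hK : IsMinimalSeparator G X Y K)
    (hN : IsSeparator G X Y (NSet G X)) (hne : K ≠ NSet G X) :
    (NSet G X \ K).Nonempty := by
  rw [Set.nonempty_iff_ne_empty]
  intro h
  have hsub : NSet G X ⊆ K := by rwa [← Set.diff_eq_empty]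
  rcases eq_or_ssubset_of_subset hsub with h' | h'
  · exact hne h'.symm
  · exact hK.2 _ h' hN

lemma X_nonempty_of_minimal (hK : IsMinimalSeparator G X Y K) (hne : K ≠ NSet G X) :
    X.Nonempty := by
  rw [Set.nonempty_iff_ne_empty]
  intro hX
  have hsep : IsSeparator G X Y (∅ : Set V) :=
    ⟨Set.empty_subset _, fun x hx => absurd hx (by simp [hX])⟩
  rcases eq_or_ne K ∅ with h | h
  · exact hne (by simp [h, NSet, hX])
  · exact hK.2 ∅ (Set.empty_ssubset.2 (Set.nonempty_iff_ne_empty.2 h)) hsep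

variable [Fintype V]

lemma CE_empty (hnorm : Normalized G X Y) : CE G X Y (∅ : Set V) = 0 := by
  have h := CE_le (G := G) (X := X) (Y := Y) hnorm.1 (Set.disjoint_empty _)
  have h2 : excess G X Y (NSet G X) = 0 := by
    unfold excess; rw [normalized_minSep hnorm]; omega
  omega

lemma CE_pos (hnorm : Normalized G X Y) (hP : P.Nonempty) (hPN : P ⊆ NSet G X)
    (hfeas : ∃ J, IsSeparator G X Y J ∧ Disjoint J P) : 1 ≤ CE G X Y P := by
  obtain ⟨J, hJ⟩ := exists_witness hfeas
  have hne : J ≠ NSet G X := by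
    rintro rfl
    obtain ⟨p, hp⟩ := hP
    exact Set.disjoint_left.1 hJ.2.1 (hPN hp) hp
  have h := normalized_card_lt hnorm hJ.1 hne
  rw [← hJ.2.2]
  unfold excess; omega

lemma exists_increase (hP : P ⊆ NSet G X)
    (hfeas : ∃ J, IsSeparator G X Y J ∧ Disjoint J P)
    {S'} (hS' : S' ⊆ P) (hlt : CE G X Y S' < CE G X Y P) :
    ∃ s ∈ P, CE G X Y S' + 1 ≤ CE G X Y (insert s S') := by
  by_contra hc
  push_neg at hc
  have key : ∀ T : Set V, T.Finite → T ⊆ P → CE G X Y (S' ∪ T) ≤ CE G X Y S' := by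
    intro T hTfin
    refine Set.Finite.induction_on
      (motive := fun T _ => T ⊆ P → CE G X Y (S' ∪ T) ≤ CE G X Y S') T hTfin (by simp) ?_
    intro a s ha hs ih hsub
    have hsP : s ⊆ P := fun x hx => hsub (Set.mem_insert_of_mem _ hx)
    have haP : a ∈ P := hsub (Set.mem_insert _ _)
    by_cases haS' : a ∈ S'
    · have : S' ∪ insert a s = S' ∪ s := by
        rw [Set.union_insert, Set.insert_eq_self.2 (Set.mem_union_left _ haS')]
      rw [this]; exact ih hsP
    · have hAB : (S' ∪ s) ∪ insert a S' = S' ∪ insert a s := by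
        rw [Set.union_insert, Set.union_insert]
        ext x; simp only [Set.mem_insert_iff, Set.mem_union]; tauto
      have hABi : (S' ∪ s) ∩ insert a S' = S' := by
        ext x
        simp only [Set.mem_inter_iff, Set.mem_union, Set.mem_insert_iff]
        constructor
        · rintro ⟨h1 | h1, h2 | h2⟩ <;> first
            | assumption
            | (subst h2; first | exact absurd h1 haS' | exact absurd h1 ha)
        · intro h; exact ⟨Or.inl h, Or.inr h⟩
      have hsm := CE_submod (G := G) (Y := Y) (A := S' ∪ s) (B := insert a S')
        (Set.union_subset (hS'.trans hP) (hsP.trans hP))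
        (Set.insert_subset (hP haP) (hS'.trans hP))
        (by obtain ⟨J, h1, h2⟩ := hfeas
            exact ⟨J, h1, h2.mono_right (Set.union_subset hS' hsP)⟩)
        (by obtain ⟨J, h1, h2⟩ := hfeas
            exact ⟨J, h1, h2.mono_right (Set.insert_subset haP hS')⟩)
      rw [hAB, hABi] at hsm
      have h1 := ih hsP
      have h2 := hc a haP
      omega
  have h := key P (Set.toFinite _) subset_rfl
  rw [Set.union_eq_self_of_subset_left hS'] at h
  omega

lemma exists_small_S (hP : P ⊆ NSet G X)
    (hfeas : ∃ J, IsSeparator G X Y J ∧ Disjoint J P) :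
    ∃ S1, S1 ⊆ P ∧ S1.ncard ≤ CE G X Y S1 ∧ CE G X Y S1 = CE G X Y P := by
  suffices h : ∀ k (S' : Set V), S' ⊆ P → S'.ncard ≤ CE G X Y S' →
      CE G X Y P - CE G X Y S' ≤ k →
      ∃ S1, S1 ⊆ P ∧ S1.ncard ≤ CE G X Y S1 ∧ CE G X Y S1 = CE G X Y P by
    exact h (CE G X Y P) ∅ (Set.empty_subset _) (by simp) (by omega)
  intro k
  induction k with
  | zero =>
    intro S' hsub hcard hle
    have h1 : CE G X Y S' ≤ CE G X Y P := CE_mono hsub hfeas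
    exact ⟨S', hsub, hcard, by omega⟩
  | succ k ih =>
    intro S' hsub hcard hle
    rcases eq_or_lt_of_le (CE_mono hsub hfeas) with heq | hlt
    · exact ⟨S', hsub, hcard, heq⟩
    · obtain ⟨s, hsP, hs⟩ := exists_increase hP hfeas hsub hlt
      refine ih (insert s S') (Set.insert_subset hsP hsub) ?_ ?_
      · have := Set.ncard_insert_le s S'
        omega
      · omega

lemma important_witness_le (hK : IsImportantSeparator G X Y K)
    (hS : S ⊆ NSet G X) (hdisjK : Disjoint K S)
    (hK1 : IsWitness G X Y S K1) : NR G Y K1 ⊆ NR G Y K := by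
  have hK1m := witness_minimal hK1
  set R1 := NR G Y K1 with hR1
  set R := NR G Y K with hR
  have hsepU : IsSeparator G X Y (NSet G (R1 ∪ R)) :=
    frontier_sep (fun x hx => Or.inl (X_sub_NR hK1.1 hx)) (Y_cond_union hK1.1 hK.1.1)
  have hsepI : IsSeparator G X Y (NSet G (R1 ∩ R)) :=
    frontier_sep (fun x hx => ⟨X_sub_NR hK1.1 hx, X_sub_NR hK.1.1 hx⟩)
      (Y_cond_inter hK1.1 hK.1.1)
  have hdI : Disjoint (NSet G (R1 ∩ R)) S := by
    rw [Set.disjoint_right]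
    intro s hs
    have h1 : s ∈ R1 := nset_sub_NR hK1.1 (hS hs) (Set.disjoint_right.1 hK1.2.1 hs)
    have h2 : s ∈ R := nset_sub_NR hK.1.1 (hS hs) (Set.disjoint_right.1 hdisjK hs)
    exact fun h => h.1 ⟨h1, h2⟩
  have h2 : CE G X Y S ≤ excess G X Y (NSet G (R1 ∩ R)) := CE_le hsepI hdI
  have hsub := nset_submod (G := G) R1 R
  rw [minimal_sep_nset_NR hK1m, minimal_sep_nset_NR hK.1] at hsub
  have m1 := minSep_le hsepU
  have m2 := minSep_le hsepI
  have m3 := minSep_le hK1.1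
  have m4 := minSep_le hK.1.1
  have e1 := hK1.2.2
  have hcard : (NSet G (R1 ∪ R)).ncard ≤ K.ncard := by
    unfold excess at h2 e1; omega
  have hKsub : R ⊆ NR G Y (NSet G (R1 ∪ R)) := fun v hv =>
    sub_NR_frontier (Y_cond_union hK1.1 hK.1.1) (Or.inr hv)
  rcases eq_or_ne (NR G Y K) (NR G Y (NSet G (R1 ∪ R))) with h | h
  · intro v hv
    have hv2 : v ∈ NR G Y (NSet G (R1 ∪ R)) :=
      sub_NR_frontier (Y_cond_union hK1.1 hK.1.1) (Or.inl hv)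
    rw [hR, h]
    exact hv2
  · exact absurd ⟨NSet G (R1 ∪ R), hsepU, ⟨hKsub, h⟩, hcard⟩ hK.2

lemma important_witness_pure (hS1 : S1 ⊆ P) (hP : P ⊆ NSet G X)
    (hCE : CE G X Y S1 = CE G X Y P)
    (hK1 : IsWitness G X Y S1 K1)
    (hK1max : ∀ J, IsWitness G X Y S1 J → (NR G Y J).ncard ≤ (NR G Y K1).ncard)
    (hfeasP : ∃ J, IsSeparator G X Y J ∧ Disjoint J P) :
    Disjoint K1 P := by
  obtain ⟨Kf, hKf⟩ := exists_witness hfeasP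
  have hK1m := witness_minimal hK1
  have hKfm := witness_minimal hKf
  set R1 := NR G Y K1 with hR1
  set Rf := NR G Y Kf with hRf
  have hsepU : IsSeparator G X Y (NSet G (R1 ∪ Rf)) :=
    frontier_sep (fun x hx => Or.inl (X_sub_NR hK1.1 hx)) (Y_cond_union hK1.1 hKf.1)
  have hsepI : IsSeparator G X Y (NSet G (R1 ∩ Rf)) :=
    frontier_sep (fun x hx => ⟨X_sub_NR hK1.1 hx, X_sub_NR hKf.1 hx⟩)
      (Y_cond_inter hK1.1 hKf.1)
  have hmem : ∀ s ∈ S1, s ∈ R1 ∧ s ∈ Rf := by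
    intro s hs
    constructor
    · exact nset_sub_NR hK1.1 (hP (hS1 hs)) (Set.disjoint_right.1 hK1.2.1 hs)
    · exact nset_sub_NR hKf.1 (hP (hS1 hs)) (Set.disjoint_right.1 hKf.2.1 (hS1 hs))
  have hdI : Disjoint (NSet G (R1 ∩ Rf)) S1 := by
    rw [Set.disjoint_right]
    intro s hs
    exact fun h => h.1 ⟨(hmem s hs).1, (hmem s hs).2⟩
  have hdU : Disjoint (NSet G (R1 ∪ Rf)) S1 := by
    rw [Set.disjoint_right]
    intro s hs
    exact fun h => h.1 (Or.inl (hmem s hs).1)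
  have h2 : CE G X Y S1 ≤ excess G X Y (NSet G (R1 ∩ Rf)) := CE_le hsepI hdI
  have h3 : CE G X Y S1 ≤ excess G X Y (NSet G (R1 ∪ Rf)) := CE_le hsepU hdU
  have hsub := nset_submod (G := G) R1 Rf
  rw [minimal_sep_nset_NR hK1m, minimal_sep_nset_NR hKfm] at hsub
  have m1 := minSep_le hsepU
  have m2 := minSep_le hsepI
  have m3 := minSep_le hK1.1
  have m4 := minSep_le hKf.1
  have e1 := hK1.2.2
  have e2 := hKf.2.2
  have hW : IsWitness G X Y S1 (NSet G (R1 ∪ Rf)) := by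
    refine ⟨hsepU, hdU, ?_⟩
    have : excess G X Y (NSet G (R1 ∪ Rf)) ≤ CE G X Y S1 := by
      unfold excess at h2 e1 e2 ⊢; omega
    omega
  have hmax := hK1max _ hW
  have hsubNR : R1 ∪ Rf ⊆ NR G Y (NSet G (R1 ∪ Rf)) :=
    sub_NR_frontier (Y_cond_union hK1.1 hKf.1)
  have hcard2 : (NR G Y (NSet G (R1 ∪ Rf))).ncard ≤ R1.ncard := hmax
  have heq : R1 = NR G Y (NSet G (R1 ∪ Rf)) :=
    Set.eq_of_subset_of_ncard_le (fun v hv => hsubNR (Or.inl hv)) hcard2 (Set.toFinite _)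
  have hRfsub : Rf ⊆ R1 := fun v hv => heq ▸ hsubNR (Or.inr hv)
  rw [Set.disjoint_right]
  intro v hv hvK1
  have hvKf : v ∉ Kf := Set.disjoint_right.1 hKf.2.1 hv
  have : v ∈ Rf := nset_sub_NR hKf.1 (hP hv) hvKf
  exact (hRfsub this).1 hvK1

end Aux3
section Aux4

variable {V : Type*} {G : SimpleGraph V} {X Y K K1 J Jm : Set V}

lemma pr_walk_of_walk {a b : V} (w : G.Walk a b)
    (h : ∀ u ∈ w.support, u ∉ NR G Y K1 \ X) :
    ∃ w' : (PrGraph G X Y K1).Walk a b, w'.support = w.support := by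
  induction w with
  | nil => exact ⟨SimpleGraph.Walk.nil, rfl⟩
  | @cons x y z hadj p ih =>
    obtain ⟨w', hw'⟩ := ih (fun u hu => h u (by
      rw [SimpleGraph.Walk.support_cons]; exact List.mem_cons_of_mem _ hu))
    refine ⟨SimpleGraph.Walk.cons ⟨hadj.ne, h x (by
      rw [SimpleGraph.Walk.support_cons]; exact List.mem_cons_self), h y (by
      rw [SimpleGraph.Walk.support_cons]
      exact List.mem_cons_of_mem _ p.start_mem_support), Or.inl hadj⟩ w', ?_⟩
    exact congrArg (x :: ·) hw'

lemma walk_of_pr_walk_avoid_X {a b : V} (w : (PrGraph G X Y K1).Walk a b)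
    (h : ∀ u ∈ w.support, u ∉ X) : ∃ w' : G.Walk a b, w'.support = w.support := by
  induction w with
  | nil => exact ⟨SimpleGraph.Walk.nil, rfl⟩
  | @cons x y z hadj p ih =>
    obtain ⟨w', hw'⟩ := ih (fun u hu => h u (by
      rw [SimpleGraph.Walk.support_cons]; exact List.mem_cons_of_mem _ hu))
    have hGadj : G.Adj x y := by
      rcases hadj.2.2.2 with hG | ⟨hx, -⟩ | ⟨-, hy⟩
      · exact hG
      · exact absurd hx (h x (by
          rw [SimpleGraph.Walk.support_cons]; exact List.mem_cons_self))
      · exact absurd hy (h y (by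
          rw [SimpleGraph.Walk.support_cons]
          exact List.mem_cons_of_mem _ p.start_mem_support))
    exact ⟨SimpleGraph.Walk.cons hGadj w', by
      rw [SimpleGraph.Walk.support_cons, SimpleGraph.Walk.support_cons, hw']⟩

lemma walk_of_pr_walk_avoid_K1 {a b : V} (w : (PrGraph G X Y K1).Walk a b)
    (h : ∀ u ∈ w.support, u ∉ K1) : ∃ w' : G.Walk a b, w'.support = w.support := by
  induction w with
  | nil => exact ⟨SimpleGraph.Walk.nil, rfl⟩
  | @cons x y z hadj p ih =>
    obtain ⟨w', hw'⟩ := ih (fun u hu => h u (by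
      rw [SimpleGraph.Walk.support_cons]; exact List.mem_cons_of_mem _ hu))
    have hGadj : G.Adj x y := by
      rcases hadj.2.2.2 with hG | ⟨-, hy⟩ | ⟨hx, -⟩
      · exact hG
      · exact absurd hy (h y (by
          rw [SimpleGraph.Walk.support_cons]
          exact List.mem_cons_of_mem _ p.start_mem_support))
      · exact absurd hx (h x (by
          rw [SimpleGraph.Walk.support_cons]; exact List.mem_cons_self))
    exact ⟨SimpleGraph.Walk.cons hGadj w', by
      rw [SimpleGraph.Walk.support_cons, SimpleGraph.Walk.support_cons, hw']⟩

lemma sep_of_pr_sep (hXY : Disjoint X Y) (hK1 : IsSeparator G X Y K1)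
    (hJ : IsSeparator (PrGraph G X Y K1) X Y J) : IsSeparator G X Y J := by
  refine ⟨hJ.1, fun x hx y hy w => ?_⟩
  by_contra hc
  push_neg at hc
  have hyC : y ∉ NR G Y K1 ∪ X := by
    rintro (h | h)
    · exact Y_notin_NR hK1 hy h
    · exact Set.disjoint_left.1 hXY h hy
  have hxC : x ∈ NR G Y K1 ∪ X := Or.inr hx
  obtain ⟨u, c, hu, hcC, hadj, p, hp1, hp2, hpc⟩ := exists_first_cross w.reverse hyC hxC
  have huK1 : u ∈ K1 := by
    have huNR : u ∉ NR G Y K1 := fun h => hu (Or.inl h)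
    by_contra huK1
    have huR : u ∈ Reach G Y K1 := mem_reach_of_not_NR huK1 huNR
    rcases hcC with hcNR | hcX
    · exact hcNR.2 (reach_adj huR hadj hcNR.1)
    · exact sep_not_reach hK1 hcX (reach_adj huR hadj (fun h => hK1.1 h (Or.inl hcX)))
  obtain ⟨p', hp'⟩ := pr_walk_of_walk p (fun v hv h => (hp1 v hv) (Or.inl h.1))
  have hadjS : (PrGraph G X Y K1).Adj u x :=
    ⟨fun h => (hK1.1 (h ▸ huK1)) (Or.inl hx), fun h => hu (Or.inl h.1),
      fun h => h.2 hx, Or.inr (Or.inr ⟨huK1, hx⟩)⟩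
  obtain ⟨v, hv, hvJ⟩ := hJ.2 x hx y hy (p'.concat hadjS).reverse
  rw [SimpleGraph.Walk.support_reverse] at hv
  have hv' := List.mem_reverse.1 hv
  rw [SimpleGraph.Walk.support_concat, hp'] at hv'
  rcases List.mem_append.1 hv' with h | h
  · have := hp2 v h
    rw [SimpleGraph.Walk.support_reverse] at this
    exact hc v (List.mem_reverse.1 this) hvJ
  · rw [List.mem_singleton] at h
    subst h
    exact hc v w.start_mem_support hvJ

lemma pr_special_adj (hK1 : IsSeparator G X Y K1) {u x0 : V} (hu : u ∈ K1) (hx0 : x0 ∈ X) :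
    (PrGraph G X Y K1).Adj u x0 :=
  ⟨fun h => (hK1.1 (h ▸ hu)) (Or.inl hx0), fun h => h.1.1 hu,
    fun h => h.2 hx0, Or.inr (Or.inr ⟨hu, hx0⟩)⟩

lemma reachG_not_NR (hXne : X.Nonempty) (hK1 : IsSeparator G X Y K1)
    (hJ' : IsSeparator (PrGraph G X Y K1) X Y J) {v : V} (hv : v ∈ Reach G Y J) :
    v ∉ NR G Y K1 := by
  intro hvNR
  obtain ⟨y, hy, w, hw⟩ := hv
  have hyNR : y ∉ NR G Y K1 := Y_notin_NR hK1 hy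
  obtain ⟨u, c, hu, hcC, hadj, p, hp1, hp2, hpc⟩ := exists_first_cross w hyNR hvNR
  have huK1 : u ∈ K1 := by
    by_contra huK1
    exact hcC.2 (reach_adj (mem_reach_of_not_NR huK1 hu) hadj hcC.1)
  obtain ⟨p', hp'⟩ := pr_walk_of_walk p (fun z hz h => hp1 z hz h.1)
  obtain ⟨x0, hx0⟩ := hXne
  obtain ⟨z, hz, hzJ⟩ := hJ'.2 x0 hx0 y hy (p'.concat (pr_special_adj hK1 huK1 hx0)).reverse
  rw [SimpleGraph.Walk.support_reverse] at hz
  have hz' := List.mem_reverse.1 hz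
  rw [SimpleGraph.Walk.support_concat, hp'] at hz'
  rcases List.mem_append.1 hz' with h | h
  · exact hw z (hp2 z h) hzJ
  · rw [List.mem_singleton] at h
    subst h
    exact hJ'.1 hzJ (Or.inl hx0)

lemma reach_pr_eq (hXne : X.Nonempty) (hK1 : IsSeparator G X Y K1)
    (hJ' : IsSeparator (PrGraph G X Y K1) X Y J) :
    Reach (PrGraph G X Y K1) Y J = Reach G Y J := by
  classical
  ext v
  constructor
  · rintro ⟨y, hy, w, hw⟩
    have hXsup : ∀ u ∈ w.support, u ∉ X := by
      intro u hu huX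
      obtain ⟨z, hz, hzJ⟩ := hJ'.2 u huX y hy (w.takeUntil u hu).reverse
      rw [SimpleGraph.Walk.support_reverse] at hz
      exact hw z ((SimpleGraph.Walk.support_takeUntil_subset _ _) (List.mem_reverse.1 hz)) hzJ
    obtain ⟨w', hw'⟩ := walk_of_pr_walk_avoid_X w hXsup
    exact ⟨y, hy, w', by rw [hw']; exact hw⟩
  · rintro ⟨y, hy, w, hw⟩
    have hsup : ∀ u ∈ w.support, u ∈ Reach G Y J :=
      support_sub_reach w (mem_reach_self hy (fun h => hJ'.1 h (Or.inr hy))) hw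
    obtain ⟨w', hw'⟩ := pr_walk_of_walk (K1 := K1) w
      (fun u hu h => reachG_not_NR hXne hK1 hJ' (hsup u hu) h.1)
    exact ⟨y, hy, w', by rw [hw']; exact hw⟩

lemma NR_pr_eq (hXne : X.Nonempty) (hK1 : IsSeparator G X Y K1)
    (hJ' : IsSeparator (PrGraph G X Y K1) X Y J) :
    NR (PrGraph G X Y K1) Y J = NR G Y J := by
  ext v
  rw [mem_NR_iff, mem_NR_iff, reach_pr_eq hXne hK1 hJ']

lemma pr_nset (hXne : X.Nonempty) (hK1 : IsSeparator G X Y K1) :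
    NSet (PrGraph G X Y K1) X = K1 := by
  ext v
  constructor
  · rintro ⟨hvX, x, hx, hadj⟩
    rcases hadj.2.2.2 with hG | ⟨-, hvK1⟩ | ⟨hxK1, -⟩
    · by_contra hvK1
      exact hadj.2.2.1 ⟨nset_sub_NR hK1 ⟨hvX, x, hx, hG⟩ hvK1, hvX⟩
    · exact hvK1
    · exact absurd (Or.inl hx) (hK1.1 hxK1)
  · intro hvK1
    obtain ⟨x, hx⟩ := hXne
    exact ⟨fun h => hK1.1 hvK1 (Or.inl h), x, hx, (pr_special_adj hK1 hvK1 hx).symm⟩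

lemma K1_sub_NR_union (hK1m : IsMinimalSeparator G X Y K1) (hK : IsSeparator G X Y K)
    (hle : NR G Y K1 ⊆ NR G Y K) : K1 ⊆ NR G Y K ∪ K := by
  intro v hv
  by_cases hvK : v ∈ K
  · exact Or.inr hvK
  refine Or.inl ⟨hvK, fun hvR => ?_⟩
  obtain ⟨u, hadj, hu⟩ := minimal_sep_exists_adj_reach hK1m hv
  have huNR : u ∈ NR G Y K := hle (reachX_sub_NR hK1m.1 hu)
  exact huNR.2 (reach_adj hvR hadj.symm huNR.1)

lemma pr_sep_K (hXY : Disjoint X Y) (hK1m : IsMinimalSeparator G X Y K1)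
    (hK : IsSeparator G X Y K) (hle : NR G Y K1 ⊆ NR G Y K) :
    IsSeparator (PrGraph G X Y K1) X Y K := by
  refine ⟨hK.1, fun x hx y hy w => ?_⟩
  by_contra hc
  push_neg at hc
  have hyC : y ∉ X ∪ K1 := by
    rintro (h | h)
    · exact Set.disjoint_left.1 hXY h hy
    · exact hK1m.1.1 h (Or.inr hy)
  have hxC : x ∈ X ∪ K1 := Or.inl hx
  obtain ⟨u, c, hu, hcC, hadj, p, hp1, hp2, hpc⟩ :=
    exists_first_cross (G := PrGraph G X Y K1) w.reverse hyC hxC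
  obtain ⟨p0, hp0⟩ := walk_of_pr_walk_avoid_X p (fun z hz h => hp1 z hz (Or.inl h))
  have hGadj : G.Adj u c := by
    rcases hadj.2.2.2 with h | ⟨h, -⟩ | ⟨h, -⟩
    · exact h
    · exact absurd (Or.inl h) hu
    · exact absurd (Or.inr h) hu
  have hwsup : ∀ z ∈ p.support, z ∉ K := by
    intro z hz
    have := hp2 z hz
    rw [SimpleGraph.Walk.support_reverse] at this
    exact hc z (List.mem_reverse.1 this)
  have hcK : c ∉ K := by
    rw [SimpleGraph.Walk.support_reverse] at hpc
    exact hc c (List.mem_reverse.1 hpc)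
  have hcreach : c ∈ Reach G Y K := by
    refine reach_walk (mem_reach_self hy (fun h => hK.1 h (Or.inr hy))) (p0.concat hGadj) ?_
    intro z hz
    rw [SimpleGraph.Walk.support_concat] at hz
    rcases List.mem_append.1 hz with h | h
    · exact hwsup z (hp0 ▸ h)
    · rw [List.mem_singleton] at h; subst h; exact hcK
  rcases hcC with hcX | hcK1
  · exact sep_not_reach hK hcX hcreach
  · rcases K1_sub_NR_union hK1m hK hle hcK1 with h | h
    · exact h.2 hcreach
    · exact hcK h

end Aux4
section Aux5

variable {V : Type*} {G : SimpleGraph V} {X Y K K1 J Jm : Set V}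

lemma pr_minimal_avoid (hJm : IsMinimalSeparator (PrGraph G X Y K1) X Y Jm) :
    ∀ v ∈ Jm, v ∉ NR G Y K1 \ X := by
  intro v hv hvNR
  obtain ⟨u, hadj⟩ := minimal_sep_adj hJm hv
  exact hadj.2.1 hvNR

lemma pr_NR_le (hXne : X.Nonempty) (hK1 : IsSeparator G X Y K1)
    (hJm : IsMinimalSeparator (PrGraph G X Y K1) X Y Jm) :
    NR G Y K1 ⊆ NR G Y Jm := by
  intro v hv
  refine ⟨?_, ?_⟩
  · intro hvJm
    by_cases hvX : v ∈ X
    · exact hJm.1.1 hvJm (Or.inl hvX)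
    · exact pr_minimal_avoid hJm v hvJm ⟨hv, hvX⟩
  · rintro ⟨y, hy, w, hw⟩
    have hyNR : y ∉ NR G Y K1 := Y_notin_NR hK1 hy
    obtain ⟨u, c, hu, hcC, hadj, p, hp1, hp2, hpc⟩ := exists_first_cross w hyNR hv
    have huK1 : u ∈ K1 := by
      by_contra huK1
      exact hcC.2 (reach_adj (mem_reach_of_not_NR huK1 hu) hadj hcC.1)
    obtain ⟨p', hp'⟩ := pr_walk_of_walk p (fun z hz h => hp1 z hz h.1)
    obtain ⟨x0, hx0⟩ := hXne
    obtain ⟨z, hz, hzJ⟩ := hJm.1.2 x0 hx0 y hy (p'.concat (pr_special_adj hK1 huK1 hx0)).reverse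
    rw [SimpleGraph.Walk.support_reverse] at hz
    have hz' := List.mem_reverse.1 hz
    rw [SimpleGraph.Walk.support_concat, hp'] at hz'
    rcases List.mem_append.1 hz' with h | h
    · exact hw z (hp2 z h) hzJ
    · rw [List.mem_singleton] at h
      subst h
      exact hJm.1.1 hzJ (Or.inl hx0)

variable [Fintype V]

lemma exists_minimal_sep_subset (hJ : IsSeparator G X Y J) :
    ∃ Jm, Jm ⊆ J ∧ IsMinimalSeparator G X Y Jm := by
  suffices h : ∀ (n : ℕ) (J' : Set V), J'.ncard ≤ n → IsSeparator G X Y J' →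
      ∃ Jm, Jm ⊆ J' ∧ IsMinimalSeparator G X Y Jm by
    exact h J.ncard J le_rfl hJ
  intro n
  induction n with
  | zero =>
    intro J' hcard hsep
    have : J' = ∅ := by
      rw [← Set.ncard_eq_zero (Set.toFinite _)]; omega
    refine ⟨J', subset_rfl, hsep, fun K' hss _ => ?_⟩
    rw [this] at hss
    exact hss.2 (Set.empty_subset _)
  | succ n ih =>
    intro J' hcard hsep
    by_cases hmin : ∀ K' , K' ⊂ J' → ¬ IsSeparator G X Y K'
    · exact ⟨J', subset_rfl, hsep, hmin⟩
    · push_neg at hmin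
      obtain ⟨K', hss, hsep'⟩ := hmin
      have : K'.ncard < J'.ncard := Set.ncard_lt_ncard hss (Set.toFinite _)
      obtain ⟨Jm, h1, h2⟩ := ih K' (by omega) hsep'
      exact ⟨Jm, h1.trans hss.subset, h2⟩

lemma pr_normalized (hXY : Disjoint X Y) (hXne : X.Nonempty)
    (hK1imp : IsImportantSeparator G X Y K1) :
    Normalized (PrGraph G X Y K1) X Y ∧ minSepSize (PrGraph G X Y K1) X Y = K1.ncard := by
  have hK1 : IsSeparator G X Y K1 := hK1imp.1.1
  have sep1 : IsSeparator (PrGraph G X Y K1) X Y K1 := by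
    refine ⟨hK1.1, fun x hx y hy w => ?_⟩
    by_contra hc
    push_neg at hc
    obtain ⟨w', hw'⟩ := walk_of_pr_walk_avoid_K1 w hc
    obtain ⟨z, hz, hzK1⟩ := hK1.2 x hx y hy w'
    exact hc z (hw' ▸ hz) hzK1
  have huniq : ∀ J', IsSeparator (PrGraph G X Y K1) X Y J' → J' ≠ K1 →
      K1.ncard < J'.ncard := by
    intro J' hJ' hne
    obtain ⟨Jm, hJmsub, hJm⟩ := exists_minimal_sep_subset hJ'
    have hJmG : IsSeparator G X Y Jm := sep_of_pr_sep hXY hK1 hJm.1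
    have hle : NR G Y K1 ⊆ NR G Y Jm := pr_NR_le hXne hK1 hJm
    rcases eq_or_ne (NR G Y K1) (NR G Y Jm) with heq | hneNR
    · have hsub : K1 ⊆ J' := (minimal_sub_of_NR_eq hK1imp.1 hJmG heq).trans hJmsub
      by_contra hcard
      push_neg at hcard
      exact hne (Set.eq_of_subset_of_ncard_le hsub hcard (Set.toFinite _)).symm
    · have : ¬ (Jm.ncard ≤ K1.ncard) := by
        intro hcard
        exact hK1imp.2 ⟨Jm, hJmG, ⟨hle, hneNR⟩, hcard⟩
      have h2 : Jm.ncard ≤ J'.ncard := Set.ncard_le_ncard hJmsub (Set.toFinite _)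
      omega
  have hnorm : Normalized (PrGraph G X Y K1) X Y := by
    constructor
    · rw [pr_nset hXne hK1]; exact sep1
    · intro J' hJ' hne
      rw [pr_nset hXne hK1] at hne ⊢
      exact huniq J' hJ' hne
  refine ⟨hnorm, ?_⟩
  rw [normalized_minSep hnorm, pr_nset hXne hK1]

lemma pr_important (hXY : Disjoint X Y) (hXne : X.Nonempty)
    (hK1imp : IsImportantSeparator G X Y K1) (hK : IsImportantSeparator G X Y K)
    (hle : NR G Y K1 ⊆ NR G Y K) : IsImportantSeparator (PrGraph G X Y K1) X Y K := by
  have hK1 : IsSeparator G X Y K1 := hK1imp.1.1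
  have hKsep' : IsSeparator (PrGraph G X Y K1) X Y K := pr_sep_K hXY hK1imp.1 hK.1.1 hle
  refine ⟨⟨hKsep', fun K' hss hsep' => hK.1.2 K' hss (sep_of_pr_sep hXY hK1 hsep')⟩, ?_⟩
  rintro ⟨K', hsep', hlt, hcard⟩
  have hK'G := sep_of_pr_sep hXY hK1 hsep'
  have e1 := NR_pr_eq hXne hK1 hKsep'
  have e2 := NR_pr_eq hXne hK1 hsep'
  rw [SepLT, e1, e2] at hlt
  exact hK.2 ⟨K', hK'G, hlt, hcard⟩

end Aux5
section Main

lemma compound_ne_nil {V : Type*} {X Y : Set V} {G : SimpleGraph V} {l : List (Set V)}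
    {K : Set V} (h : IsCompoundWitness X Y G l K) : l ≠ [] := by
  cases h <;> simp

theorem main_internal {V : Type*} [Fintype V] (X Y : Set V) (hXY : Disjoint X Y) :
    ∀ (n : ℕ) (G : SimpleGraph V) (K : Set V), excess G X Y K ≤ n →
    Normalized G X Y → IsImportantSeparator G X Y K → K ≠ NSet G X →
    ∃ attr : List (Set V),
      attr.Pairwise (fun A B => Disjoint A B) ∧
      (∀ S ∈ attr, S.Nonempty) ∧
      IsCompoundWitness X Y G attr K ∧
      (attr.map Set.ncard).sum ≤ excess G X Y K ∧
      (∀ S ∈ attr, ∀ v ∈ S, ∃ u, G.Adj v u) ∧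
      (∀ S ∈ attr, Disjoint S K) ∧
      (∀ S ∈ attr, ∀ v ∈ S, v ∉ X ∧ v ∉ Y) := by
  intro n
  induction n with
  | zero =>
    intro G K hn hnorm hK hKne
    exfalso
    have h1 := normalized_card_lt hnorm hK.1.1 hKne
    have h2 := minSep_le hK.1.1
    unfold excess at hn
    omega
  | succ n ih =>
    intro G K hn hnorm hK hKne
    have hNsep : IsSeparator G X Y (NSet G X) := hnorm.1
    have hKsep : IsSeparator G X Y K := hK.1.1
    have hXne : X.Nonempty := X_nonempty_of_minimal hK.1 hKne
    have hPne : (NSet G X \ K).Nonempty := nset_diff_nonempty hK.1 hNsep hKne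
    have hPN : NSet G X \ K ⊆ NSet G X := Set.diff_subset
    have hKdisjP : Disjoint K (NSet G X \ K) := Set.disjoint_right.2 fun v hv => hv.2
    have hfeasP : ∃ J, IsSeparator G X Y J ∧ Disjoint J (NSet G X \ K) :=
      ⟨K, hKsep, hKdisjP⟩
    obtain ⟨S1, hS1P, hS1card, hS1CE⟩ := exists_small_S hPN hfeasP
    have hS1N : S1 ⊆ NSet G X := hS1P.trans hPN
    have hdisjKS1 : Disjoint K S1 := hKdisjP.mono_right hS1P
    have hfeasS1 : ∃ J, IsSeparator G X Y J ∧ Disjoint J S1 := ⟨K, hKsep, hdisjKS1⟩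
    obtain ⟨K1, hK1imp, hK1max⟩ := exists_important_witness hS1N hfeasS1
    have hK1w : IsWitness G X Y S1 K1 := hK1imp.1
    have hpure : Disjoint K1 (NSet G X \ K) :=
      important_witness_pure hS1P hPN hS1CE hK1w hK1max hfeasP
    have hle : NR G Y K1 ⊆ NR G Y K := important_witness_le hK hS1N hdisjKS1 hK1w
    have hCEpos : 1 ≤ CE G X Y (NSet G X \ K) := CE_pos hnorm hPne hPN hfeasP
    have hS1ne : S1.Nonempty := by
      rw [Set.nonempty_iff_ne_empty]
      rintro rfl
      rw [CE_empty hnorm] at hS1CE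
      omega
    have hnadj : ∀ s ∈ S1, ∀ y ∈ Y, ¬ G.Adj s y := fun s hs =>
      nset_not_adj_Y hKsep (hS1N hs) (hS1P hs).2
    have hK1neN : K1 ≠ NSet G X := by
      rintro rfl
      obtain ⟨s, hs⟩ := hS1ne
      exact Set.disjoint_left.1 hK1w.2.1 (hS1N hs) hs
    -- numeric facts
    have a1 := normalized_card_lt hnorm hK1w.1 hK1neN
    have a2 := normalized_card_lt hnorm hKsep hKne
    have a3 : excess G X Y K1 = CE G X Y S1 := hK1w.2.2
    have a4 : CE G X Y S1 ≤ excess G X Y K := CE_le hKsep hdisjKS1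
    have a5 := minSep_le hK1w.1
    have a6 := minSep_le hKsep
    rcases eq_or_ne (NR G Y K1) (NR G Y K) with heq | hne2
    · -- base case: K1 = K
      have hK1K : K1 = K := minimal_eq_of_NR_eq (witness_minimal hK1w) hK.1 heq
      rw [hK1K] at hK1imp a3
      refine ⟨[S1], by simp, by simpa using hS1ne, ?_, ?_, ?_, ?_, ?_⟩
      · exact IsCompoundWitness.base G S1 K hS1ne hS1N hnadj hK1imp
      · simpa using by omega
      · intro S hS v hv
        rw [List.mem_singleton] at hS
        subst hS
        obtain ⟨-, x, hx, hadj⟩ := hS1N hv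
        exact ⟨x, hadj.symm⟩
      · intro S hS
        rw [List.mem_singleton] at hS
        subst hS
        exact hdisjKS1.symm
      · intro S hS v hv
        rw [List.mem_singleton] at hS
        subst hS
        have := hNsep.1 (hS1N hv)
        exact ⟨fun h => this (Or.inl h), fun h => this (Or.inr h)⟩
    · -- step case
      obtain ⟨hnorm', hmin'⟩ := pr_normalized hXY hXne hK1imp.2
      have hKimp' : IsImportantSeparator (PrGraph G X Y K1) X Y K :=
        pr_important hXY hXne hK1imp.2 hK hle
      have hKneK1 : K ≠ NSet (PrGraph G X Y K1) X := by
        rw [pr_nset hXne hK1w.1]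
        rintro rfl
        exact hne2 rfl
      have hexc' : excess (PrGraph G X Y K1) X Y K = K.ncard - K1.ncard := by
        unfold excess
        rw [hmin']
      have hK1leK : K1.ncard ≤ K.ncard := by
        unfold excess at a3 a4
        omega
      have hlt : excess (PrGraph G X Y K1) X Y K ≤ n := by
        rw [hexc']
        unfold excess at hn
        omega
      obtain ⟨attr', hpair', hne', hcw', hsum', hE1', hE2', hE3'⟩ :=
        ih (PrGraph G X Y K1) K hlt hnorm' hKimp' hKneK1
      have hattrN : ∀ S ∈ attr', Disjoint S (NSet G X) := by
        intro S hS
        rw [Set.disjoint_left]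
        intro v hv hvN
        by_cases hvK1 : v ∈ K1
        · by_cases hvK : v ∈ K
          · exact Set.disjoint_left.1 (hE2' S hS) hv hvK
          · exact Set.disjoint_left.1 hpure hvK1 ⟨hvN, hvK⟩
        · have hvNR : v ∈ NR G Y K1 := nset_sub_NR hK1w.1 hvN hvK1
          obtain ⟨u, hadj⟩ := hE1' S hS v hv
          exact hadj.2.1 ⟨hvNR, (hE3' S hS v hv).1⟩
      refine ⟨S1 :: attr', ?_, ?_, ?_, ?_, ?_, ?_, ?_⟩
      · rw [List.pairwise_cons]
        exact ⟨fun S hS => ((hattrN S hS).symm.mono_left hS1N), hpair'⟩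
      · intro S hS
        rcases List.mem_cons.1 hS with rfl | hS'
        · exact hS1ne
        · exact hne' S hS'
      · exact IsCompoundWitness.step G S1 attr' K K1 hS1ne hS1N hnadj
          (compound_ne_nil hcw') hattrN ⟨hK1w, hK1imp.2⟩ hcw'
      · rw [List.map_cons, List.sum_cons]
        rw [hexc'] at hsum'
        unfold excess at a3 ⊢
        omega
      · intro S hS v hv
        rcases List.mem_cons.1 hS with rfl | hS'
        · obtain ⟨-, x, hx, hadj⟩ := hS1N hv
          exact ⟨x, hadj.symm⟩
        · obtain ⟨u, hadj⟩ := hE1' S hS' v hv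
          rcases hadj.2.2.2 with hG | ⟨hvX, -⟩ | ⟨hvK1, -⟩
          · exact ⟨u, hG⟩
          · exact absurd hvX (hE3' S hS' v hv).1
          · exact minimal_sep_adj (witness_minimal hK1w) hvK1
      · intro S hS
        rcases List.mem_cons.1 hS with rfl | hS'
        · exact hdisjKS1.symm
        · exact hE2' S hS'
      · intro S hS v hv
        rcases List.mem_cons.1 hS with rfl | hS'
        · have := hNsep.1 (hS1N hv)
          exact ⟨fun h => this (Or.inl h), fun h => this (Or.inr h)⟩
        · exact hE3' S hS' v hv

end Main

/-- Let `G` be an `X`–`Y` normalized graph and `K ≠ N(X)` an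
important `X`–`Y` separator of `G`.  Then `K` is a compound witness w.r.t.
`X`, `Y` in `G` of rank at most `excess(K)`. -/
theorem important_separator_is_compoundWitness
    {V : Type*} [Fintype V] (G : SimpleGraph V) (X Y K : Set V)
    (hXY : Disjoint X Y) (hnorm : Normalized G X Y)
    (hK : IsImportantSeparator G X Y K) (hKne : K ≠ NSet G X) :
    ∃ attr : List (Set V),
      attr.Pairwise (fun A B => Disjoint A B) ∧
      (∀ S ∈ attr, S.Nonempty) ∧
      IsCompoundWitness X Y G attr K ∧
      (attr.map Set.ncard).sum ≤ excess G X Y K := by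
  obtain ⟨attr, h1, h2, h3, h4, -⟩ :=
    main_internal X Y hXY (excess G X Y K) G K le_rfl hnorm hK hKne
  exact ⟨attr, h1, h2, h3, h4⟩
end

section
/- Let G be a graph on n vertices, let X and Y be disjoint subsets of V(G) such that at least one X–Y separator exists, and let k > 0 be an integer. Then the number of important X–Y separators of G of excess at most k is at most ∑_{i=0}^{k} C(n,i). -/
variable {V : Type*}

namespace ImpSepAux

open SimpleGraph Set

variable {V : Type*} {G : SimpleGraph V} {A B X Y K K1 K2 P : Set V} {u v a x y z : V}

/-! ### Reach API -/

lemma mem_reach_self (ha : a ∈ A) (hb : a ∉ B) : a ∈ Reach G A B :=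
  ⟨a, ha, Walk.nil, by simp [hb]⟩

lemma reach_not_mem (h : v ∈ Reach G A B) : v ∉ B := by
  obtain ⟨a, ha, w, hw⟩ := h
  exact hw v w.end_mem_support

lemma reach_adj (h : u ∈ Reach G A B) (huv : G.Adj u v) (hv : v ∉ B) :
    v ∈ Reach G A B := by
  obtain ⟨a, ha, w, hw⟩ := h
  refine ⟨a, ha, w.concat huv, ?_⟩
  intro x hx
  rw [Walk.support_concat, List.mem_append] at hx
  rcases hx with hx | hx
  · exact hw x hx
  · rw [List.mem_singleton] at hx; subst hx; exact hv

lemma reach_rec {P : Set V} (base : ∀ a ∈ A, a ∉ B → a ∈ P)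
    (step : ∀ ⦃u v⦄, u ∈ P → u ∈ Reach G A B → G.Adj u v → v ∉ B → v ∈ P) :
    Reach G A B ⊆ P := by
  have main : ∀ (u v : V) (w : G.Walk u v), (∀ x ∈ w.support, x ∉ B) →
      u ∈ P → u ∈ Reach G A B → v ∈ P := by
    intro u v w
    induction w with
    | nil => intro _ hP _; exact hP
    | cons h p ih =>
      rename_i c d e
      intro hsupp hP hR
      have hdB : d ∉ B := hsupp d (by simp)
      have hdR : d ∈ Reach G A B := reach_adj hR h hdB
      have hdP : d ∈ P := step hP hR h hdB
      exact ih (fun x hx => hsupp x (by simp [hx])) hdP hdR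
  rintro v ⟨a, ha, w, hw⟩
  have haB : a ∉ B := hw a w.start_mem_support
  exact main a v w hw (base a ha haB) (mem_reach_self ha haB)

lemma reach_mono (h : B' ⊆ B) : Reach G A B ⊆ Reach G A B' := by
  rintro v ⟨a, ha, w, hw⟩
  exact ⟨a, ha, w, fun x hx => fun hxB => hw x hx (h hxB)⟩

/-- A separator iff `K` avoids `X ∪ Y` and no `X`-vertex is reachable from `Y` avoiding `K`. -/
lemma isSeparator_iff :
    IsSeparator G X Y K ↔ K ⊆ (X ∪ Y)ᶜ ∧ ∀ x ∈ X, x ∉ Reach G Y K := by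
  constructor
  · rintro ⟨h1, h2⟩
    refine ⟨h1, fun x hx hr => ?_⟩
    obtain ⟨y, hy, w, hw⟩ := hr
    obtain ⟨v, hv, hvK⟩ := h2 x hx y hy w.reverse
    rw [Walk.support_reverse, List.mem_reverse] at hv
    exact hw v hv hvK
  · rintro ⟨h1, h2⟩
    refine ⟨h1, fun x hx y hy w => ?_⟩
    by_contra hc
    push_neg at hc
    exact h2 x hx ⟨y, hy, w.reverse, by
      intro u hu
      rw [Walk.support_reverse, List.mem_reverse] at hu
      exact hc u hu⟩

lemma sep_not_reach (h : IsSeparator G X Y K) (hx : x ∈ X) :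
    x ∉ Reach G Y K := (isSeparator_iff.1 h).2 x hx

lemma sep_not_mem_X (h : IsSeparator G X Y K) (hv : v ∈ K) : v ∉ X := by
  intro hx; exact (h.1 hv) (Or.inl hx)

lemma sep_not_mem_Y (h : IsSeparator G X Y K) (hv : v ∈ K) : v ∉ Y := by
  intro hy; exact (h.1 hv) (Or.inr hy)

lemma Y_subset_reach (h : IsSeparator G X Y K) : Y ⊆ Reach G Y K :=
  fun y hy => mem_reach_self hy (fun hyK => sep_not_mem_Y h hyK hy)

lemma NR_eq_compl : NR G Y K = (K ∪ Reach G Y K)ᶜ := by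
  ext v
  simp only [NR, Reach, Set.mem_setOf_eq, Set.mem_compl_iff, Set.mem_union]
  constructor
  · rintro ⟨h1, h2⟩ (h | h)
    · exact h1 h
    · exact h2 h
  · intro h
    exact ⟨fun hK => h (Or.inl hK), fun hr => h (Or.inr hr)⟩

lemma sepLE_iff : SepLE G Y K1 K2 ↔ K2 ∪ Reach G Y K2 ⊆ K1 ∪ Reach G Y K1 := by
  rw [SepLE, NR_eq_compl, NR_eq_compl]
  exact Set.compl_subset_compl

lemma NR_disjoint_K : v ∈ NR G Y K → v ∉ K := fun h => h.1

lemma NR_not_reach (h : v ∈ NR G Y K) : v ∉ Reach G Y K := by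
  rw [NR_eq_compl] at h; exact fun hr => h (Or.inr hr)

lemma mem_NR_of (h1 : v ∉ K) (h2 : v ∉ Reach G Y K) : v ∈ NR G Y K := by
  rw [NR_eq_compl]; rintro (h | h) <;> [exact h1 h; exact h2 h]

end ImpSepAux
namespace ImpSepAux

variable {V : Type*} {G : SimpleGraph V} {A B R X Y K K1 K2 P : Set V} {u v a x y z : V}

/-! ### Boundary separators -/

lemma mem_NSet (h1 : v ∉ R) (h2 : u ∈ R) (h3 : G.Adj u v) : v ∈ NSet G R :=
  ⟨h1, u, h2, h3⟩

lemma NSet_disj (h : v ∈ NSet G R) : v ∉ R := h.1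

lemma reach_NSet_subset (hY : Y ⊆ R) : Reach G Y (NSet G R) ⊆ R := by
  refine reach_rec (fun a ha _ => hY ha) ?_
  intro u v hu _ huv hvN
  by_contra hvR
  exact hvN (mem_NSet hvR hu huv)

/-- The boundary of a set `R` with `Y ⊆ R` and suitable `X`-avoidance is a separator. -/
lemma NSet_isSeparator (hY : Y ⊆ R) (hX : ∀ x ∈ X, x ∉ R) (hXN : ∀ x ∈ X, x ∉ NSet G R) :
    IsSeparator G X Y (NSet G R) := by
  rw [isSeparator_iff]
  constructor
  · intro v hv
    rintro (hvX | hvY)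
    · exact hXN v hvX hv
    · exact NSet_disj hv (hY hvY)
  · intro x hx hr
    exact hX x hx (reach_NSet_subset hY hr)

/-- `N(Reach G Y K) ⊆ K` for a separator `K` (in fact for any `K`). -/
lemma NSet_reach_subset : NSet G (Reach G Y K) ⊆ K := by
  rintro v ⟨hv, u, hu, huv⟩
  by_contra hvK
  exact hv (reach_adj hu huv hvK)

/-- Submodularity of the boundary. -/
lemma NSet_submodular [Finite V] (A B : Set V) :
    (NSet G (A ∪ B)).ncard + (NSet G (A ∩ B)).ncard ≤ (NSet G A).ncard + (NSet G B).ncard := by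
  have h1 : NSet G (A ∪ B) ∪ NSet G (A ∩ B) ⊆ NSet G A ∪ NSet G B := by
    rintro v (⟨hv, u, hu, huv⟩ | ⟨hv, u, hu, huv⟩)
    · rcases hu with hu | hu
      · exact Or.inl ⟨fun h => hv (Or.inl h), u, hu, huv⟩
      · exact Or.inr ⟨fun h => hv (Or.inr h), u, hu, huv⟩
    · by_cases hvA : v ∈ A
      · have hvB : v ∉ B := fun h => hv ⟨hvA, h⟩
        exact Or.inr ⟨hvB, u, hu.2, huv⟩
      · exact Or.inl ⟨hvA, u, hu.1, huv⟩
  have h2 : NSet G (A ∪ B) ∩ NSet G (A ∩ B) ⊆ NSet G A ∩ NSet G B := by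
    rintro v ⟨⟨hv, -⟩, ⟨-, u, hu, huv⟩⟩
    exact ⟨⟨fun h => hv (Or.inl h), u, hu.1, huv⟩, ⟨fun h => hv (Or.inr h), u, hu.2, huv⟩⟩
  calc (NSet G (A ∪ B)).ncard + (NSet G (A ∩ B)).ncard
      = (NSet G (A ∪ B) ∪ NSet G (A ∩ B)).ncard + (NSet G (A ∪ B) ∩ NSet G (A ∩ B)).ncard :=
        (Set.ncard_union_add_ncard_inter _ _ (Set.toFinite _) (Set.toFinite _)).symm
    _ ≤ (NSet G A ∪ NSet G B).ncard + (NSet G A ∩ NSet G B).ncard := by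
        exact Nat.add_le_add (Set.ncard_le_ncard h1 (Set.toFinite _))
          (Set.ncard_le_ncard h2 (Set.toFinite _))
    _ = (NSet G A).ncard + (NSet G B).ncard :=
        Set.ncard_union_add_ncard_inter _ _ (Set.toFinite _) (Set.toFinite _)

/-! ### Join and meet of separators -/

/-- Join: the boundary of the intersection of the reach sets. Dominates both. -/
noncomputable def joinS (G : SimpleGraph V) (Y K1 K2 : Set V) : Set V :=
  NSet G (Reach G Y K1 ∩ Reach G Y K2)

/-- Meet: the boundary of the union of the reach sets. -/
noncomputable def meetS (G : SimpleGraph V) (Y K1 K2 : Set V) : Set V :=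
  NSet G (Reach G Y K1 ∪ Reach G Y K2)

lemma joinS_subset (h1 : IsSeparator G X Y K1) (h2 : IsSeparator G X Y K2) :
    joinS G Y K1 K2 ⊆ (K1 ∪ Reach G Y K1) ∩ (K2 ∪ Reach G Y K2) := by
  rintro v ⟨hv, u, ⟨hu1, hu2⟩, huv⟩
  constructor
  · by_cases hvK : v ∈ K1
    · exact Or.inl hvK
    · exact Or.inr (reach_adj hu1 huv hvK)
  · by_cases hvK : v ∈ K2
    · exact Or.inl hvK
    · exact Or.inr (reach_adj hu2 huv hvK)

lemma meetS_subset : meetS G Y K1 K2 ⊆ K1 ∪ K2 := by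
  rintro v ⟨hv, u, hu, huv⟩
  rcases hu with hu | hu
  · left
    by_contra hvK
    exact hv (Or.inl (reach_adj hu huv hvK))
  · right
    by_contra hvK
    exact hv (Or.inr (reach_adj hu huv hvK))

lemma joinS_isSeparator (h1 : IsSeparator G X Y K1) (h2 : IsSeparator G X Y K2) :
    IsSeparator G X Y (joinS G Y K1 K2) := by
  refine NSet_isSeparator (fun y hy => ⟨Y_subset_reach h1 hy, Y_subset_reach h2 hy⟩) ?_ ?_
  · intro x hx hr
    exact sep_not_reach h1 hx hr.1
  · intro x hx hv
    rcases (joinS_subset h1 h2 hv).1 with hK | hr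
    · exact sep_not_mem_X h1 hK hx
    · exact sep_not_reach h1 hx hr

lemma meetS_isSeparator (h1 : IsSeparator G X Y K1) (h2 : IsSeparator G X Y K2) :
    IsSeparator G X Y (meetS G Y K1 K2) := by
  refine NSet_isSeparator (fun y hy => Or.inl (Y_subset_reach h1 hy)) ?_ ?_
  · rintro x hx (hr | hr)
    · exact sep_not_reach h1 hx hr
    · exact sep_not_reach h2 hx hr
  · intro x hx hv
    rcases meetS_subset hv with hK | hK
    · exact sep_not_mem_X h1 hK hx
    · exact sep_not_mem_X h2 hK hx

lemma le_joinS_left (h1 : IsSeparator G X Y K1) (h2 : IsSeparator G X Y K2) :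
    SepLE G Y K1 (joinS G Y K1 K2) := by
  rw [sepLE_iff]
  intro v hv
  rcases hv with hv | hv
  · exact (joinS_subset h1 h2 hv).1
  · have := reach_NSet_subset (G := G)
      (Y := Y) (R := Reach G Y K1 ∩ Reach G Y K2)
      (fun y hy => ⟨Y_subset_reach h1 hy, Y_subset_reach h2 hy⟩) hv
    exact Or.inr this.1

lemma le_joinS_right (h1 : IsSeparator G X Y K1) (h2 : IsSeparator G X Y K2) :
    SepLE G Y K2 (joinS G Y K1 K2) := by
  rw [sepLE_iff]
  intro v hv
  rcases hv with hv | hv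
  · exact (joinS_subset h1 h2 hv).2
  · have := reach_NSet_subset (G := G)
      (Y := Y) (R := Reach G Y K1 ∩ Reach G Y K2)
      (fun y hy => ⟨Y_subset_reach h1 hy, Y_subset_reach h2 hy⟩) hv
    exact Or.inr this.2

/-- Size bound: `|join| + |meet| ≤ |K1| + |K2|`. -/
lemma joinS_meetS_card [Finite V] (h1 : IsSeparator G X Y K1) (h2 : IsSeparator G X Y K2) :
    (joinS G Y K1 K2).ncard + (meetS G Y K1 K2).ncard ≤ K1.ncard + K2.ncard := by
  have hsub := NSet_submodular (G := G) (Reach G Y K1) (Reach G Y K2)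
  have e1 : (NSet G (Reach G Y K1)).ncard ≤ K1.ncard :=
    Set.ncard_le_ncard NSet_reach_subset (Set.toFinite _)
  have e2 : (NSet G (Reach G Y K2)).ncard ≤ K2.ncard :=
    Set.ncard_le_ncard NSet_reach_subset (Set.toFinite _)
  calc (joinS G Y K1 K2).ncard + (meetS G Y K1 K2).ncard
      = (meetS G Y K1 K2).ncard + (joinS G Y K1 K2).ncard := by ring
    _ ≤ (NSet G (Reach G Y K1)).ncard + (NSet G (Reach G Y K2)).ncard := hsub
    _ ≤ K1.ncard + K2.ncard := by omega

end ImpSepAux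
namespace ImpSepAux

variable {V : Type*} {G : SimpleGraph V} {A B R X Y K K0 K1 K2 P : Set V} {u v a x y z : V}

/-! ### Minimum separator size -/

lemma minSepSize_le (h : IsSeparator G X Y K) : minSepSize G X Y ≤ K.ncard :=
  Nat.sInf_le ⟨K, h, rfl⟩

lemma exists_min_sep (hex : ∃ K, IsSeparator G X Y K) :
    ∃ K, IsSeparator G X Y K ∧ K.ncard = minSepSize G X Y := by
  have hne : {n | ∃ K, IsSeparator G X Y K ∧ K.ncard = n}.Nonempty := by
    obtain ⟨K, hK⟩ := hex
    exact ⟨K.ncard, K, hK, rfl⟩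
  exact Nat.sInf_mem hne

/-- A minimum-size separator is a minimal separator. -/
lemma min_size_minimal [Finite V] (h : IsSeparator G X Y K)
    (hc : K.ncard = minSepSize G X Y) : IsMinimalSeparator G X Y K := by
  refine ⟨h, fun K' hK' hsep => ?_⟩
  have := Set.ncard_lt_ncard hK' (Set.toFinite K)
  have := minSepSize_le hsep
  omega

/-- A vertex of a minimal separator has a "private" `X`–`Y` walk meeting `K` only in `u`. -/
lemma minimal_private [Finite V] (h : IsMinimalSeparator G X Y K) (hu : u ∈ K) :
    ∃ x ∈ X, ∃ y ∈ Y, ∃ w : G.Walk x y, u ∈ w.support ∧ ∀ v ∈ w.support, v ∈ K → v = u := by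
  have hne : ¬ IsSeparator G X Y (K \ {u}) := h.2 _ (by
    refine ⟨Set.diff_subset, fun hKK => ?_⟩
    have : u ∈ K \ {u} := hKK hu
    simp at this)
  rw [IsSeparator] at hne
  push_neg at hne
  have hsub : K \ {u} ⊆ (X ∪ Y)ᶜ := fun v hv => h.1.1 hv.1
  obtain ⟨x, hx, y, hy, w, hw⟩ := hne hsub
  refine ⟨x, hx, y, hy, w, ?_, ?_⟩
  · obtain ⟨v, hv, hvK⟩ := h.1.2 x hx y hy w
    have hmem := hw v hv
    have hvu : v = u := by
      by_contra hvu
      exact hmem ⟨hvK, hvu⟩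
    exact hvu ▸ hv
  · intro v hv hvK
    by_contra hvu
    exact hw v hv ⟨hvK, hvu⟩

/-! ### Walk splitting -/

open SimpleGraph in
/-- From a walk `w : x → y` on which `u` occurs and which meets `K0` only at `u`,
where the separator `K0` is minimal... extract: every vertex `p ≠ u` on the prefix
up to the first occurrence of `u` has an `x → p` walk avoiding `K0` entirely. -/
lemma prefix_in_NR [Finite V] [DecidableEq V] (hsep : IsSeparator G X Y K0) (hx : x ∈ X)
    {w : G.Walk x y} (hu : u ∈ w.support) (hpriv : ∀ v ∈ w.support, v ∈ K0 → v = u) :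
    ∀ p ∈ (w.takeUntil u hu).support, p ≠ u → p ∈ NR G Y K0 := by
  classical
  intro p hp hpu
  set q := w.takeUntil u hu with hq
  have hq_supp : q.support ⊆ w.support := w.support_takeUntil_subset hu
  -- vertices of q other than u are not in K0
  have hqK : ∀ v ∈ q.support, v ≠ u → v ∉ K0 := fun v hv hvu hvK =>
    hvu (hpriv v (hq_supp hv) hvK)
  -- the sub-prefix r : x → p avoids u
  have hcount : List.count u q.support = 1 := w.count_support_takeUntil_eq_one hu
  set r := q.takeUntil p hp with hr
  have hr_supp : r.support ⊆ q.support := q.support_takeUntil_subset hp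
  have hu_not_r : u ∉ r.support := by
    intro huR
    have hspec := q.take_spec hp
    have : List.count u q.support =
        List.count u r.support + List.count u (q.dropUntil p hp).support.tail := by
      conv_lhs => rw [← hspec]
      rw [SimpleGraph.Walk.support_append, List.count_append]
    have h1 : 1 ≤ List.count u r.support := List.one_le_count_iff.2 huR
    have h2 : 1 ≤ List.count u (q.dropUntil p hp).support.tail := by
      refine List.one_le_count_iff.2 ?_
      have hu_drop : u ∈ (q.dropUntil p hp).support := SimpleGraph.Walk.end_mem_support _
      rw [SimpleGraph.Walk.support_eq_cons (q.dropUntil p hp), List.mem_cons] at hu_drop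
      rcases hu_drop with h | h
      · exact absurd h.symm hpu
      · exact h
    omega
  -- so r avoids K0 entirely
  have hrK : ∀ v ∈ r.support, v ∉ K0 := by
    intro v hv
    refine hqK v (hr_supp hv) ?_
    rintro rfl
    exact hu_not_r hv
  -- p is not in K0 and not reachable from Y avoiding K0
  refine mem_NR_of (hqK p hp hpu) ?_
  rintro ⟨yy, hyy, w2, hw2⟩
  -- else x would be reachable from Y avoiding K0
  have : x ∈ Reach G Y K0 := by
    refine ⟨yy, hyy, w2.append r.reverse, ?_⟩
    intro t ht
    rw [SimpleGraph.Walk.support_append, List.mem_append] at ht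
    rcases ht with ht | ht
    · exact hw2 t ht
    · refine hrK t ?_
      have := List.mem_of_mem_tail ht
      rwa [SimpleGraph.Walk.support_reverse, List.mem_reverse] at this
  exact sep_not_reach hsep hx this

/-- Mirror lemma: a minimal separator `K0` dominated by a separator `K`
is disjoint from `Reach G Y K`. -/
lemma minimal_disj_reach [Finite V] [DecidableEq V] (hmin : IsMinimalSeparator G X Y K0)
    (hK : IsSeparator G X Y K) (hle : SepLE G Y K0 K) :
    K0 ∩ Reach G Y K = ∅ := by
  classical
  by_contra hne
  obtain ⟨u, huK0, huR⟩ := Set.nonempty_iff_ne_empty.2 hne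
  obtain ⟨x, hx, y, hy, w, hu, hpriv⟩ := minimal_private hmin huK0
  -- prefix vertices (except u) are in NR(Y,K0) ⊆ NR(Y,K), hence not in K
  have hpref : ∀ p ∈ (w.takeUntil u hu).support, p ≠ u → p ∉ K := by
    intro p hp hpu
    have := hle (prefix_in_NR hmin.1 hx hu hpriv p hp hpu)
    exact NR_disjoint_K this
  -- u itself is not in K
  have huk : u ∉ K := reach_not_mem huR
  -- so the whole prefix avoids K; x is reachable from Y avoiding K
  obtain ⟨yy, hyy, w2, hw2⟩ := huR
  have : x ∈ Reach G Y K := by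
    refine ⟨yy, hyy, w2.append (w.takeUntil u hu).reverse, ?_⟩
    intro t ht
    rw [SimpleGraph.Walk.support_append, List.mem_append] at ht
    rcases ht with ht | ht
    · exact hw2 t ht
    · have ht' : t ∈ (w.takeUntil u hu).support := by
        have := List.mem_of_mem_tail ht
        rwa [SimpleGraph.Walk.support_reverse, List.mem_reverse] at this
      by_cases htu : t = u
      · exact htu ▸ huk
      · exact hpref t ht' htu
  exact sep_not_reach hK hx this

/-- Two minimal separators with the same `NR` set coincide. -/
lemma minimal_NR_inj [Finite V] (h1 : IsMinimalSeparator G X Y K1)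
    (h2 : IsMinimalSeparator G X Y K2) (hNR : NR G Y K1 = NR G Y K2) : K1 = K2 := by
  have key : ∀ {L1 L2 : Set V}, IsMinimalSeparator G X Y L1 → IsMinimalSeparator G X Y L2 →
      NR G Y L1 = NR G Y L2 → meetS G Y L1 L2 ⊆ L1 := by
    intro L1 L2 hL1 hL2 hNR
    rintro v ⟨hv, u, hu, huv⟩
    have hv1 : v ∉ Reach G Y L1 := fun h => hv (Or.inl h)
    have hv2 : v ∉ Reach G Y L2 := fun h => hv (Or.inr h)
    have hvL : v ∈ L1 ∪ L2 := by
      rcases hu with hu | hu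
      · left; by_contra hvK; exact hv1 (reach_adj hu huv hvK)
      · right; by_contra hvK; exact hv2 (reach_adj hu huv hvK)
    rcases hvL with hvL | hvL
    · exact hvL
    · -- v ∈ L2, so v ∉ NR(Y,L2) = NR(Y,L1); and v ∉ Reach(Y,L1): so v ∈ L1
      have : v ∉ NR G Y L1 := by
        rw [hNR]
        exact fun h => NR_disjoint_K h hvL
      rw [NR_eq_compl] at this
      simp only [Set.mem_compl_iff, not_not, Set.mem_union] at this
      rcases this with h | h
      · exact h
      · exact absurd h hv1
  have hmeet := meetS_isSeparator h1.1 h2.1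
  have e1 : meetS G Y K1 K2 = K1 := by
    rcases Set.eq_or_ssubset_of_subset (key h1 h2 hNR) with h | h
    · exact h
    · exact absurd hmeet (h1.2 _ h)
  have e2 : meetS G Y K1 K2 = K2 := by
    have hsym : meetS G Y K1 K2 = meetS G Y K2 K1 := by
      rw [meetS, meetS, Set.union_comm]
    rcases Set.eq_or_ssubset_of_subset (key h2 h1 hNR.symm) with h | h
    · rw [← hsym] at h; exact h
    · rw [← hsym] at h; exact absurd hmeet (h2.2 _ h)
  rw [← e1, e2]

end ImpSepAux
namespace ImpSepAux

variable {V : Type*} {G : SimpleGraph V} {X Y K K0 K1 K2 P Km : Set V} {u v x y z : V}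

/-! ### The maximum minimum separator -/

/-- There is a minimum-size separator dominating all minimum-size separators. -/
lemma exists_max_min_sep [Finite V] (hex : ∃ K, IsSeparator G X Y K) :
    ∃ Km, IsSeparator G X Y Km ∧ Km.ncard = minSepSize G X Y ∧
      ∀ P, IsSeparator G X Y P → P.ncard = minSepSize G X Y → SepLE G Y P Km := by
  classical
  set 𝒮 : Set (Set V) := {P | IsSeparator G X Y P ∧ P.ncard = minSepSize G X Y} with h𝒮
  have hne : 𝒮.Nonempty := exists_min_sep hex
  obtain ⟨Km, hKm, hmax⟩ := Set.Finite.exists_maximalFor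
    (fun P => (NR G Y P).ncard) 𝒮 (Set.toFinite 𝒮) hne
  refine ⟨Km, hKm.1, hKm.2, fun P hP hPc => ?_⟩
  -- join of P and Km is a min separator dominating both
  have hJsep : IsSeparator G X Y (joinS G Y P Km) := joinS_isSeparator hP hKm.1
  have hJcard : (joinS G Y P Km).ncard = minSepSize G X Y := by
    have h1 := joinS_meetS_card hP hKm.1
    have h2 := minSepSize_le (meetS_isSeparator hP hKm.1)
    have h3 := minSepSize_le hJsep
    rw [hPc, hKm.2] at h1
    omega
  have hJ𝒮 : joinS G Y P Km ∈ 𝒮 := ⟨hJsep, hJcard⟩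
  have hKmJ : SepLE G Y Km (joinS G Y P Km) := le_joinS_right hP hKm.1
  have hcard_le : (NR G Y Km).ncard ≤ (NR G Y (joinS G Y P Km)).ncard :=
    Set.ncard_le_ncard hKmJ (Set.toFinite _)
  have heq := hmax hJ𝒮 hcard_le
  have hNReq : NR G Y Km = NR G Y (joinS G Y P Km) :=
    Set.eq_of_subset_of_ncard_le hKmJ heq (Set.toFinite _)
  have hPJ : SepLE G Y P (joinS G Y P Km) := le_joinS_left hP hKm.1
  rw [SepLE, ← hNReq] at hPJ
  exact hPJ

/-- An important separator dominates every minimum-size separator. -/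
lemma important_dominates [Finite V] (himp : IsImportantSeparator G X Y K)
    (hP : IsSeparator G X Y P) (hPc : P.ncard = minSepSize G X Y) :
    SepLE G Y P K := by
  have hKsep := himp.1.1
  have hJsep : IsSeparator G X Y (joinS G Y K P) := joinS_isSeparator hKsep hP
  have hJcard : (joinS G Y K P).ncard ≤ K.ncard := by
    have h1 := joinS_meetS_card hKsep hP
    have h2 := minSepSize_le (meetS_isSeparator hKsep hP)
    rw [hPc] at h1
    omega
  have hKJ : SepLE G Y K (joinS G Y K P) := le_joinS_left hKsep hP
  have hNReq : NR G Y K = NR G Y (joinS G Y K P) := by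
    by_contra hne
    exact himp.2 ⟨joinS G Y K P, hJsep, ⟨hKJ, hne⟩, hJcard⟩
  have hPJ : SepLE G Y P (joinS G Y K P) := le_joinS_right hKsep hP
  rw [SepLE, ← hNReq] at hPJ
  exact hPJ

/-! ### The exchange (Z) lemma -/

/-- If `Km` is a maximum minimum separator and `z ∈ Km` is not in a minimum
separator `P`, then `z` is reachable from `Y` avoiding `P`. -/
lemma z_lemma [Finite V] (hKm : IsSeparator G X Y Km) (hKmc : Km.ncard = minSepSize G X Y)
    (hmax : ∀ P, IsSeparator G X Y P → P.ncard = minSepSize G X Y → SepLE G Y P Km)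
    (hP : IsSeparator G X Y P) (hPc : P.ncard = minSepSize G X Y)
    (hz : z ∈ Km) (hzP : z ∉ P) : z ∈ Reach G Y P := by
  have hJsep : IsSeparator G X Y (joinS G Y P Km) := joinS_isSeparator hP hKm
  have hJcard : (joinS G Y P Km).ncard = minSepSize G X Y := by
    have h1 := joinS_meetS_card hP hKm
    have h2 := minSepSize_le (meetS_isSeparator hP hKm)
    have h3 := minSepSize_le hJsep
    rw [hPc, hKmc] at h1
    omega
  -- J = Km
  have hNReq : NR G Y Km = NR G Y (joinS G Y P Km) := by
    apply Set.Subset.antisymm (le_joinS_right hP hKm)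
    exact hmax _ hJsep hJcard
  have hJKm : joinS G Y P Km = Km :=
    minimal_NR_inj (min_size_minimal hJsep hJcard) (min_size_minimal hKm hKmc) hNReq.symm
  -- z ∈ Km = J = N(Reach P ∩ Reach Km): z has a neighbor in Reach P, z ∉ P
  have hzJ : z ∈ joinS G Y P Km := by rw [hJKm]; exact hz
  obtain ⟨hznot, t, ht, htz⟩ := hzJ
  exact reach_adj ht.1 htz hzP

/-! ### Enlarging `X` -/

lemma sep_anti {X X' : Set V} (hXX : X ⊆ X') (h : IsSeparator G X' Y K) :
    IsSeparator G X Y K := by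
  refine ⟨fun v hv => ?_, fun x hx y hy w => h.2 x (hXX hx) y hy w⟩
  have := h.1 hv
  rw [Set.mem_compl_iff, Set.mem_union] at this ⊢
  tauto

lemma important_mono {X X' : Set V} (hXX : X ⊆ X') (hsep' : IsSeparator G X' Y K)
    (himp : IsImportantSeparator G X Y K) : IsImportantSeparator G X' Y K := by
  refine ⟨⟨hsep', fun K' hK' hsep => himp.1.2 K' hK' (sep_anti hXX hsep)⟩, ?_⟩
  rintro ⟨K', hK'sep, hlt, hcard⟩
  exact himp.2 ⟨K', sep_anti hXX hK'sep, hlt, hcard⟩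

end ImpSepAux
namespace ImpSepAux

variable {V : Type*} {G : SimpleGraph V} {X Y K K1 K2 Km : Set V} {z : V}

/-- `K` is an important separator of minimum size for `(X'', Y)`. -/
def Good (G : SimpleGraph V) (X'' Y K : Set V) : Prop :=
  IsImportantSeparator G X'' Y K ∧ K.ncard = minSepSize G X'' Y

/-- There is at most one important separator of minimum size. -/
lemma good_unique [Finite V] {X'' : Set V} (h1 : Good G X'' Y K1) (h2 : Good G X'' Y K2) :
    K1 = K2 := by
  obtain ⟨Km, hKm, hKmc, hmax⟩ := exists_max_min_sep (G := G) (X := X'') (Y := Y)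
    ⟨K1, h1.1.1.1⟩
  have e1 : NR G Y K1 = NR G Y Km :=
    Set.Subset.antisymm (hmax K1 h1.1.1.1 h1.2) (important_dominates h1.1 hKm hKmc)
  have e2 : NR G Y K2 = NR G Y Km :=
    Set.Subset.antisymm (hmax K2 h2.1.1.1 h2.2) (important_dominates h2.1 hKm hKmc)
  exact minimal_NR_inj h1.1.1 h2.1.1 (e1.trans e2.symm)

/-- Main recursion: an important separator of excess `≤ d` becomes the minimum
important separator after adding at most `d` vertices to `X`. -/
lemma rec_lemma [Finite V] :
    ∀ (d : ℕ) (X' : Set V), Disjoint X' Y → IsImportantSeparator G X' Y K →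
      K.ncard ≤ minSepSize G X' Y + d →
      ∃ S : Set V, S.ncard ≤ d ∧ Good G (X' ∪ S) Y K := by
  classical
  intro d
  induction d with
  | zero =>
    intro X' hXY himp hle
    refine ⟨∅, by simp, ?_⟩
    rw [Set.union_empty]
    exact ⟨himp, le_antisymm (by simpa using hle) (minSepSize_le himp.1.1)⟩
  | succ d ih =>
    intro X' hXY himp hle
    by_cases heq : K.ncard = minSepSize G X' Y
    · exact ⟨∅, by simp, by rw [Set.union_empty]; exact ⟨himp, heq⟩⟩
    · have hgt : minSepSize G X' Y < K.ncard :=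
        lt_of_le_of_ne (minSepSize_le himp.1.1) (Ne.symm heq)
      -- max min separator
      obtain ⟨Km, hKm, hKmc, hmax⟩ := exists_max_min_sep (G := G) (X := X') (Y := Y)
        ⟨K, himp.1.1⟩
      -- z ∈ Km \ K
      have hzex : ∃ z, z ∈ Km ∧ z ∉ K := by
        by_contra hc
        push_neg at hc
        have hss : Km ⊂ K := by
          refine ⟨hc, fun hKK => ?_⟩
          have : Km = K := Set.Subset.antisymm hc hKK
          rw [this] at hKmc
          omega
        exact himp.1.2 Km hss hKm
      obtain ⟨z, hzKm, hzK⟩ := hzex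
      have hdom : SepLE G Y Km K := important_dominates himp hKm hKmc
      have hdisj : Km ∩ Reach G Y K = ∅ :=
        minimal_disj_reach (min_size_minimal hKm hKmc) himp.1.1 hdom
      have hzreach : z ∉ Reach G Y K := fun h =>
        Set.eq_empty_iff_forall_notMem.1 hdisj z ⟨hzKm, h⟩
      -- K is a separator for X' ∪ {z}
      have hsep'' : IsSeparator G (X' ∪ {z}) Y K := by
        rw [isSeparator_iff]
        constructor
        · intro v hv
          rw [Set.mem_compl_iff, Set.mem_union, Set.mem_union, Set.mem_singleton_iff]
          push_neg
          refine ⟨⟨fun hvX => (himp.1.1.1 hv) (Or.inl hvX), fun hvz => ?_⟩,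
            fun hvY => (himp.1.1.1 hv) (Or.inr hvY)⟩
          subst hvz
          exact hzK hv
        · rintro x (hx | hx)
          · exact sep_not_reach himp.1.1 hx
          · rw [Set.mem_singleton_iff] at hx
            subst hx
            exact hzreach
      have hXY'' : Disjoint (X' ∪ {z}) Y := by
        rw [Set.disjoint_union_left]
        refine ⟨hXY, ?_⟩
        rw [Set.disjoint_singleton_left]
        exact sep_not_mem_Y hKm hzKm
      have himp'' : IsImportantSeparator G (X' ∪ {z}) Y K :=
        important_mono Set.subset_union_left hsep'' himp
      -- minimum separator size goes up
      have hmin'' : minSepSize G X' Y + 1 ≤ minSepSize G (X' ∪ {z}) Y := by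
        refine le_csInf ⟨K.ncard, K, hsep'', rfl⟩ ?_
        rintro n ⟨W, hW, rfl⟩
        have hWsep' : IsSeparator G X' Y W := sep_anti Set.subset_union_left hW
        have hWle : minSepSize G X' Y ≤ W.ncard := minSepSize_le hWsep'
        rcases eq_or_lt_of_le hWle with hWeq | hWlt
        · exfalso
          have hzW : z ∉ W := by
            intro hzW
            have := hW.1 hzW
            exact this (Or.inl (Or.inr rfl))
          have := z_lemma hKm hKmc hmax hWsep' hWeq.symm hzKm hzW
          exact sep_not_reach hW (Or.inr rfl) this
        · omega
      have hle'' : K.ncard ≤ minSepSize G (X' ∪ {z}) Y + d := by omega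
      obtain ⟨S', hS'c, hS'good⟩ := ih (X' ∪ {z}) hXY'' himp'' hle''
      refine ⟨insert z S', ?_, ?_⟩
      · calc (insert z S').ncard ≤ S'.ncard + 1 := Set.ncard_insert_le _ _
          _ ≤ d + 1 := by omega
      · have : X' ∪ insert z S' = (X' ∪ {z}) ∪ S' := by
          ext v
          simp only [Set.mem_union, Set.mem_insert_iff, Set.mem_singleton_iff]
          tauto
        rw [this]
        exact hS'good

/-- Counting subsets of size at most `k`. -/
lemma count_small_sets [Fintype V] (k : ℕ) :
    {S : Set V | S.ncard ≤ k}.ncard ≤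
      ∑ i ∈ Finset.range (k + 1), Nat.choose (Fintype.card V) i := by
  classical
  set PP : Finset (Finset V) := (Finset.range (k + 1)).biUnion
    (fun i => Finset.powersetCard i (Finset.univ : Finset V)) with hPP
  have hle : {S : Set V | S.ncard ≤ k}.ncard ≤ (↑PP : Set (Finset V)).ncard := by
    refine Set.ncard_le_ncard_of_injOn (fun S => S.toFinset) ?_ ?_ (Set.toFinite _)
    · intro S hS
      simp only [Set.mem_setOf_eq] at hS
      have hcard : S.toFinset.card = S.ncard := (Set.ncard_eq_toFinset_card' S).symm
      simp only [hPP, Finset.coe_biUnion, Finset.coe_range, Set.mem_iUnion]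
      refine ⟨S.toFinset.card, ?_, ?_⟩
      · simp only [Set.mem_Iio]
        omega
      · rw [Finset.mem_coe, Finset.mem_powersetCard]
        exact ⟨Finset.subset_univ _, rfl⟩
    · intro S1 _ S2 _ h
      simpa using congrArg (fun (t : Finset V) => (↑t : Set V)) h
  rw [Set.ncard_coe_finset] at hle
  refine hle.trans ?_
  rw [hPP]
  refine le_trans (Finset.card_biUnion_le) ?_
  refine Finset.sum_le_sum ?_
  intro i _
  rw [Finset.card_powersetCard, Finset.card_univ]

end ImpSepAux

/-- Let `G` be a graph on `n` vertices, `X`, `Y` disjoint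
subsets of `V(G)` such that at least one `X`–`Y` separator exists, and `k > 0`
an integer.  Then the number of important `X`–`Y` separators of `G` of excess
at most `k` is at most `∑_{i=0}^{k} C(n,i)`. -/
theorem card_important_separators_le
    {V : Type*} [Fintype V] (G : SimpleGraph V) (X Y : Set V)
    (hXY : Disjoint X Y) (hex : ∃ K, IsSeparator G X Y K)
    (k : ℕ) (hk : 0 < k) :
    {K : Set V | IsImportantSeparator G X Y K ∧ excess G X Y K ≤ k}.ncard ≤
      ∑ i ∈ Finset.range (k + 1), Nat.choose (Fintype.card V) i := by
  classical
  have key : ∀ K ∈ {K : Set V | IsImportantSeparator G X Y K ∧ excess G X Y K ≤ k},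
      ∃ S : Set V, S.ncard ≤ k ∧ ImpSepAux.Good G (X ∪ S) Y K := by
    rintro K ⟨himp, hexc⟩
    have h1 : K.ncard ≤ minSepSize G X Y + k := by
      have h2 := ImpSepAux.minSepSize_le himp.1.1
      unfold excess at hexc
      omega
    exact ImpSepAux.rec_lemma k X hXY himp h1
  choose! Φ hΦ1 hΦ2 using key
  have hinj : Set.InjOn Φ {K : Set V | IsImportantSeparator G X Y K ∧ excess G X Y K ≤ k} := by
    intro K1 h1 K2 h2 he
    refine ImpSepAux.good_unique (hΦ2 K1 h1) ?_
    rw [he]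
    exact hΦ2 K2 h2
  calc {K : Set V | IsImportantSeparator G X Y K ∧ excess G X Y K ≤ k}.ncard
      ≤ {S : Set V | S.ncard ≤ k}.ncard :=
        Set.ncard_le_ncard_of_injOn Φ (fun K hK => hΦ1 K hK) hinj (Set.toFinite _)
    _ ≤ ∑ i ∈ Finset.range (k + 1), Nat.choose (Fintype.card V) i :=
        ImpSepAux.count_small_sets k
end

section
/- Let (G,T) be an instance of the multiway cut problem that has at least one multiway cut, and let t ∈ T. Then there exist a multiway cut S of (G,T) of minimum size and an important isolating cut K of t such that K ⊆ S. -/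
variable {V : Type*}

/-- A multiway cut of `(G,T)`: a set `S` of non-terminal vertices such that in
`G \ S` no two terminals lie in the same connected component. -/
def IsMultiwayCut (G : SimpleGraph V) (T S : Set V) : Prop :=
  S ⊆ Tᶜ ∧
  ∀ t1 ∈ T, ∀ t2 ∈ T, t1 ≠ t2 → ∀ w : G.Walk t1 t2, ∃ v ∈ w.support, v ∈ S

section MyHelpers

lemma myReach_avoid {G : SimpleGraph V} {A B : Set V} {v : V} (h : v ∈ Reach G A B) : v ∉ B := by
  obtain ⟨a, _, w, hw⟩ := h
  exact hw v w.end_mem_support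

lemma myReach_mono {G : SimpleGraph V} {A B B' : Set V} (h : B ⊆ B') :
    Reach G A B' ⊆ Reach G A B := by
  rintro v ⟨a, ha, w, hw⟩
  exact ⟨a, ha, w, fun x hx hxB => hw x hx (h hxB)⟩

lemma myReach_adj {G : SimpleGraph V} {A B : Set V} {r v : V} (hr : r ∈ Reach G A B)
    (hadj : G.Adj r v) (hv : v ∉ B) : v ∈ Reach G A B := by
  obtain ⟨a, ha, w, hw⟩ := hr
  refine ⟨a, ha, w.append hadj.toWalk, fun x hx => ?_⟩
  rw [SimpleGraph.Walk.mem_support_append_iff] at hx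
  rcases hx with hx | hx
  · exact hw x hx
  · have hx2 : x = r ∨ x = v := by simpa [SimpleGraph.Adj.toWalk] using hx
    rcases hx2 with rfl | rfl
    · exact hw x w.end_mem_support
    · exact hv

lemma myReach_subset_NR {G : SimpleGraph V} {X Y K : Set V} (hsep : IsSeparator G X Y K) :
    Reach G X K ⊆ NR G Y K := by
  rintro v ⟨x, hx, w, hw⟩
  refine ⟨hw v w.end_mem_support, ?_⟩
  rintro ⟨y, hy, w', hw'⟩
  obtain ⟨u, hu, huK⟩ := hsep.2 x hx y hy (w.append w'.reverse)
  rw [SimpleGraph.Walk.mem_support_append_iff] at hu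
  rcases hu with hu | hu
  · exact hw u hu huK
  · rw [SimpleGraph.Walk.support_reverse, List.mem_reverse] at hu
    exact hw' u hu huK

lemma myNR_adj {G : SimpleGraph V} {Y K : Set V} {r v : V} (hr : r ∈ NR G Y K)
    (hadj : G.Adj v r) (hv : v ∉ K) : v ∈ NR G Y K :=
  ⟨hv, fun hreach => hr.2 (myReach_adj hreach hadj hr.1)⟩

lemma myExists_boundary {G : SimpleGraph V} {R S : Set V}
    (hcl : ∀ ⦃r u⦄, r ∈ R → G.Adj r u → u ∉ S → u ∈ R) :
    ∀ {a b : V} (w : G.Walk a b), a ∈ R → b ∉ R →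
      ∃ v ∈ w.support, v ∈ S ∧ ∃ r ∈ R, G.Adj r v := by
  intro a b w
  induction w with
  | nil => intro ha hb; exact absurd ha hb
  | @cons a c b h p ih =>
    intro ha hb
    by_cases hc : c ∈ S
    · exact ⟨c, by simp [SimpleGraph.Walk.support_cons], hc, a, ha, h⟩
    · by_cases hcR : c ∈ R
      · obtain ⟨v, hv, hvrest⟩ := ih hcR hb
        exact ⟨v, by simp [SimpleGraph.Walk.support_cons, hv], hvrest⟩
      · exact absurd (hcl ha h hc) hcR

lemma myAvoid_of_NR_le {G : SimpleGraph V} {X Y K1 K2 : Set V}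
    (h1 : IsSeparator G X Y K1) (hle : NR G Y K1 ⊆ NR G Y K2) :
    Reach G X K1 ⊆ Reach G X K2 := by
  classical
  rintro v ⟨x, hx, w, hw⟩
  refine ⟨x, hx, w, fun u hu => ?_⟩
  have hu' : u ∈ Reach G X K1 :=
    ⟨x, hx, w.takeUntil u hu, fun z hz => hw z (w.support_takeUntil_subset hu hz)⟩
  exact (hle (myReach_subset_NR h1 hu')).1

lemma myExists_importantSeparator [Fintype V] (G : SimpleGraph V)
    (X Y K : Set V) (hK : IsSeparator G X Y K) :
    ∃ K', IsImportantSeparator G X Y K' ∧ K'.ncard ≤ K.ncard ∧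
      Reach G X K ⊆ Reach G X K' := by
  classical
  set 𝒦 : Set (Set V) :=
    {K' | IsSeparator G X Y K' ∧ K'.ncard ≤ K.ncard ∧ Reach G X K ⊆ Reach G X K'} with h𝒦
  have hKmem : K ∈ 𝒦 := ⟨hK, le_rfl, subset_rfl⟩
  set m := sInf {n | ∃ K' ∈ 𝒦, K'.ncard = n} with hm
  have h1 : m ∈ {n | ∃ K' ∈ 𝒦, K'.ncard = n} := Nat.sInf_mem ⟨K.ncard, K, hKmem, rfl⟩
  have hmK : m ≤ K.ncard := Nat.sInf_le ⟨K, hKmem, rfl⟩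
  set SS := {n | ∃ K' ∈ 𝒦, K'.ncard = m ∧ (NR G Y K').ncard = n} with hSS
  have hSSne : SS.Nonempty := by
    obtain ⟨K1, hK1, hc⟩ := h1; exact ⟨_, K1, hK1, hc, rfl⟩
  have hSSbdd : BddAbove SS := by
    refine ⟨Nat.card V, ?_⟩
    rintro n ⟨K', -, -, rfl⟩
    calc (NR G Y K').ncard ≤ (Set.univ : Set V).ncard :=
          Set.ncard_le_ncard (Set.subset_univ _) Set.finite_univ
      _ = Nat.card V := Set.ncard_univ V
  obtain ⟨Ks, hKs𝒦, hKscard, hKsNR⟩ := Nat.sSup_mem hSSne hSSbdd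
  obtain ⟨hKsSep, hKsle, hKsReach⟩ := hKs𝒦
  refine ⟨Ks, ⟨⟨hKsSep, ?_⟩, ?_⟩, by omega, hKsReach⟩
  · intro K0 hK0ss hK0sep
    have hK0mem : K0 ∈ 𝒦 := by
      refine ⟨hK0sep, ?_, hKsReach.trans (myReach_mono hK0ss.subset)⟩
      have := Set.ncard_le_ncard hK0ss.subset (Set.toFinite Ks)
      omega
    have h2 := Nat.sInf_le (s := {n | ∃ K' ∈ 𝒦, K'.ncard = n}) ⟨K0, hK0mem, rfl⟩
    have h3 := Set.ncard_lt_ncard hK0ss (Set.toFinite Ks)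
    omega
  · rintro ⟨K'', hsep'', ⟨hsub, hne⟩, hcard''⟩
    have hReach'' : Reach G X Ks ⊆ Reach G X K'' := myAvoid_of_NR_le hKsSep hsub
    have hK''mem : K'' ∈ 𝒦 := ⟨hsep'', by omega, hKsReach.trans hReach''⟩
    have h2 := Nat.sInf_le (s := {n | ∃ K' ∈ 𝒦, K'.ncard = n}) ⟨K'', hK''mem, rfl⟩
    have hK''card : K''.ncard = m := by omega
    have h4 : (NR G Y K'').ncard ≤ sSup SS :=
      le_csSup hSSbdd ⟨K'', hK''mem, hK''card, rfl⟩
    have h5 : (NR G Y Ks).ncard < (NR G Y K'').ncard :=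
      Set.ncard_lt_ncard ⟨hsub, fun h => hne (le_antisymm hsub h)⟩ (Set.toFinite _)
    omega

end MyHelpers

/-- Let `(G,T)` be an instance of the multiway cut problem
having at least one multiway cut and let `t ∈ T`.  Then there exist a multiway
cut `S` of `(G,T)` of minimum size and an important isolating cut `K` of `t`
(an important `{t}`–`(T \ {t})` separator) such that `K ⊆ S`. -/
theorem exists_optimal_multiwayCut_containing_important_isolating_cut
    {V : Type*} [Fintype V] (G : SimpleGraph V) (T : Set V)
    (hex : ∃ S, IsMultiwayCut G T S) (t : V) (ht : t ∈ T) :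
    ∃ S K : Set V,
      IsMultiwayCut G T S ∧
      (∀ S', IsMultiwayCut G T S' → S.ncard ≤ S'.ncard) ∧
      IsImportantSeparator G {t} (T \ {t}) K ∧
      K ⊆ S := by
  classical
  -- a minimum multiway cut S
  set cutSizes := {n | ∃ S, IsMultiwayCut G T S ∧ S.ncard = n} with hcs
  have hcsne : cutSizes.Nonempty := by obtain ⟨S, hS⟩ := hex; exact ⟨S.ncard, S, hS, rfl⟩
  obtain ⟨S, hS, hScard⟩ := Nat.sInf_mem hcsne
  have hSmin : ∀ S', IsMultiwayCut G T S' → S.ncard ≤ S'.ncard := by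
    intro S' hS'
    have := Nat.sInf_le (s := cutSizes) ⟨S', hS', rfl⟩
    omega
  set Y := T \ {t} with hY
  have hcompl : Tᶜ ⊆ ({t} ∪ Y)ᶜ := by
    intro v hv
    simp only [Set.mem_compl_iff, Set.mem_union, Set.mem_singleton_iff, hY,
      Set.mem_diff] at hv ⊢
    push_neg
    exact ⟨fun h => hv (h ▸ ht), fun h => absurd h hv⟩
  -- S is a {t}-Y separator
  have hSsep : IsSeparator G {t} Y S := by
    refine ⟨hS.1.trans hcompl, ?_⟩
    rintro x hx y hy w
    simp only [Set.mem_singleton_iff] at hx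
    subst hx
    exact hS.2 x ht y hy.1 (fun h => hy.2 h.symm) w
  set R := Reach G {t} S with hR
  set K := {v | v ∈ S ∧ ∃ r ∈ R, G.Adj r v} with hKdef
  have hKS : K ⊆ S := fun v hv => hv.1
  have htR : t ∈ R := by
    refine ⟨t, rfl, SimpleGraph.Walk.nil, ?_⟩
    intro x hx
    simp only [SimpleGraph.Walk.support_nil, List.mem_singleton] at hx
    subst hx
    intro hxS
    exact (hS.1 hxS) ht
  have hRcl : ∀ ⦃r u : V⦄, r ∈ R → G.Adj r u → u ∉ S → u ∈ R :=
    fun r u hr hadj hu => myReach_adj hr hadj hu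
  -- K is a {t}-Y separator
  have hKsep : IsSeparator G {t} Y K := by
    refine ⟨(hKS.trans hS.1).trans hcompl, ?_⟩
    rintro x hx y hy w
    simp only [Set.mem_singleton_iff] at hx
    subst hx
    have hyR : y ∉ R := by
      rintro ⟨a, ha, w', hw'⟩
      simp only [Set.mem_singleton_iff] at ha
      subst ha
      obtain ⟨u, hu, huS⟩ := hS.2 a ht y hy.1 (fun h => hy.2 h.symm) w'
      exact hw' u hu huS
    obtain ⟨v, hv, hvS, r, hrR, hadj⟩ := myExists_boundary hRcl w htR hyR
    exact ⟨v, hv, hvS, r, hrR, hadj⟩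
  -- important separator dominating K
  obtain ⟨K', hK'imp, hK'card, hK'Reach⟩ := myExists_importantSeparator G {t} Y K hKsep
  have hK'sep : IsSeparator G {t} Y K' := hK'imp.1.1
  set S' := (S \ K) ∪ K' with hS'
  -- S' is a multiway cut
  have hS'sub : S' ⊆ Tᶜ := by
    intro v hv
    rcases hv with hv | hv
    · exact hS.1 hv.1
    · have := hK'sep.1 hv
      simp only [Set.mem_compl_iff, Set.mem_union, Set.mem_singleton_iff, hY,
        Set.mem_diff] at this ⊢
      push_neg at this
      intro hvT
      exact this.1 (this.2 hvT)
  have hS'cut : IsMultiwayCut G T S' := by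
    refine ⟨hS'sub, ?_⟩
    intro t1 ht1 t2 ht2 hne w
    by_contra hcon
    push_neg at hcon
    obtain ⟨v, hvsup, hvS⟩ := hS.2 t1 ht1 t2 ht2 hne w
    have hvK : v ∈ K := by
      by_contra hvK
      exact hcon v hvsup (Or.inl ⟨hvS, hvK⟩)
    have hvK' : v ∉ K' := fun h => hcon v hvsup (Or.inr h)
    -- v is in NR G Y K'
    obtain ⟨-, r, hrR, hadj⟩ := hvK
    have hrReach : r ∈ Reach G {t} K' := hK'Reach (myReach_mono hKS hrR)
    have hrNR : r ∈ NR G Y K' := myReach_subset_NR hK'sep hrReach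
    have hvNR : v ∈ NR G Y K' := myNR_adj hrNR hadj.symm hvK'
    -- some endpoint is in Y and reaches v avoiding K', contradiction
    by_cases ht1t : t1 = t
    · have ht2Y : t2 ∈ Y := ⟨ht2, fun h => hne (ht1t.trans h.symm)⟩
      have hvrev : v ∈ w.reverse.support := by
        rw [SimpleGraph.Walk.support_reverse, List.mem_reverse]; exact hvsup
      refine hvNR.2 ⟨t2, ht2Y, w.reverse.takeUntil v hvrev, fun x hx hxK' => ?_⟩
      have hxw : x ∈ w.support := by
        have := w.reverse.support_takeUntil_subset hvrev hx
        rwa [SimpleGraph.Walk.support_reverse, List.mem_reverse] at this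
      exact hcon x hxw (Or.inr hxK')
    · have ht1Y : t1 ∈ Y := ⟨ht1, ht1t⟩
      refine hvNR.2 ⟨t1, ht1Y, w.takeUntil v hvsup, fun x hx hxK' => ?_⟩
      exact hcon x (w.support_takeUntil_subset hvsup hx) (Or.inr hxK')
  have hS'le : S'.ncard ≤ S.ncard := by
    have h1 : S'.ncard ≤ (S \ K).ncard + K'.ncard := Set.ncard_union_le _ _
    have h2 : (S \ K).ncard = S.ncard - K.ncard := Set.ncard_diff hKS
    have h3 : K.ncard ≤ S.ncard := Set.ncard_le_ncard hKS (Set.toFinite S)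
    omega
  refine ⟨S', K', hS'cut, ?_, hK'imp, fun v hv => Or.inr hv⟩
  intro S'' hS''
  exact hS'le.trans (hSmin S'' hS'')
end

section
/- Let G be an X–Y normalized graph. If (S1,…,Sr) and (S1',…,Sq') are both attributes of compound witnesses with respect to X, Y in G, and S1 ∪ … ∪ Sr = S1' ∪ … ∪ Sq', then the two sequences coincide, i.e., r = q and Si = Si' for every i. -/
variable {V : Type*}

section Helpers

variable {G : SimpleGraph V}

/-- `NR G Y K` is closed under adjacency avoiding `K`. -/
lemma NR_closed {Y K : Set V} {v u : V} (hv : v ∈ NR G Y K) (hadj : G.Adj v u)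
    (hu : u ∉ K) : u ∈ NR G Y K := by
  refine ⟨hu, ?_⟩
  rintro ⟨a, ha, w, hw⟩
  refine hv.2 ⟨a, ha, w.concat hadj.symm, ?_⟩
  intro x hx
  rw [SimpleGraph.Walk.support_concat, List.mem_append] at hx
  rcases hx with hx | hx
  · exact hw x hx
  · simp only [List.mem_singleton] at hx; subst hx; exact hv.1

lemma mem_of_adj_NR {Y K : Set V} {v u : V} (hv : v ∈ NR G Y K) (hadj : G.Adj v u)
    (hu : u ∉ NR G Y K) : u ∈ K := by
  by_contra h; exact hu (NR_closed hv hadj h)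

lemma X_subset_NR {X Y K : Set V} (hK : IsSeparator G X Y K) : X ⊆ NR G Y K := by
  intro x hx
  refine ⟨fun hxK => hK.1 hxK (Or.inl hx), ?_⟩
  rintro ⟨y, hy, w, hw⟩
  obtain ⟨v, hv, hvK⟩ := hK.2 x hx y hy w.reverse
  rw [SimpleGraph.Walk.support_reverse, List.mem_reverse] at hv
  exact hw v hv hvK

lemma Y_not_mem_NR {X Y K : Set V} (hK : K ⊆ (X ∪ Y)ᶜ) {y : V} (hy : y ∈ Y) :
    y ∉ NR G Y K := by
  intro h
  refine h.2 ⟨y, hy, SimpleGraph.Walk.nil, ?_⟩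
  intro x hx
  simp only [SimpleGraph.Walk.support_nil, List.mem_singleton] at hx
  subst hx
  exact fun hK' => hK hK' (Or.inr hy)

lemma NR_not_adj_Y {X Y K : Set V} (hKc : K ⊆ (X ∪ Y)ᶜ) {u y : V}
    (hu : u ∈ NR G Y K) (hy : y ∈ Y) (hadj : G.Adj y u) : False := by
  refine hu.2 ⟨y, hy, SimpleGraph.Walk.cons hadj SimpleGraph.Walk.nil, ?_⟩
  intro x hx
  simp only [SimpleGraph.Walk.support_cons, SimpleGraph.Walk.support_nil,
    List.mem_cons, List.mem_singleton, List.not_mem_nil, or_false] at hx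
  rcases hx with rfl | rfl
  · exact fun h => hKc h (Or.inr hy)
  · exact hu.1

/-- A walk from inside `T` to outside `T` meets `NSet G T`. -/
lemma exists_NSet_of_walk {T : Set V} : ∀ {a b : V} (w : G.Walk a b),
    a ∈ T → b ∉ T → ∃ v ∈ w.support, v ∈ NSet G T := by
  intro a b w
  induction w with
  | nil => intro ha hb; exact absurd ha hb
  | @cons a c b h p ih =>
    intro ha hb
    by_cases hc : c ∈ T
    · obtain ⟨v, hv, hvN⟩ := ih hc hb
      exact ⟨v, by simp [SimpleGraph.Walk.support_cons, hv], hvN⟩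
    · exact ⟨c, by simp [SimpleGraph.Walk.support_cons, p.start_mem_support],
        ⟨hc, a, ha, h⟩⟩

lemma S_subset_NR {X Y S K : Set V} (hK : IsSeparator G X Y K) (hdisj : Disjoint K S)
    (hS : S ⊆ NSet G X) : S ⊆ NR G Y K := by
  intro s hs
  have hsK : s ∉ K := fun h => Set.disjoint_left.mp hdisj h hs
  refine ⟨hsK, ?_⟩
  rintro ⟨y, hy, w, hw⟩
  obtain ⟨x, hx, hxs⟩ := (hS hs).2
  obtain ⟨v, hv, hvK⟩ := hK.2 x hx y hy (SimpleGraph.Walk.cons hxs w.reverse)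
  simp only [SimpleGraph.Walk.support_cons, List.mem_cons,
    SimpleGraph.Walk.support_reverse, List.mem_reverse] at hv
  rcases hv with rfl | hv
  · exact hK.1 hvK (Or.inl hx)
  · exact hw v hv hvK

lemma sepLE_boundary {Y K T : Set V} (hsub : NR G Y K ⊆ T)
    (hYT : ∀ y ∈ Y, y ∉ T) : SepLE G Y K (NSet G T) := by
  intro v hv
  refine ⟨fun h => h.1 (hsub hv), ?_⟩
  rintro ⟨y, hy, w, hw⟩
  obtain ⟨u, hu, huN⟩ := exists_NSet_of_walk w.reverse (hsub hv) (hYT y hy)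
  rw [SimpleGraph.Walk.support_reverse, List.mem_reverse] at hu
  exact hw u hu huN

lemma exists_adj_in_NR {Y K : Set V} {k : V} (hk : k ∈ K) :
    ∀ {a b : V} (w : G.Walk a b), a ∈ NR G Y K → k ∈ w.support →
    (∀ v ∈ w.support, v ∉ K \ {k}) → ∃ u ∈ NR G Y K, G.Adj u k := by
  intro a b w
  induction w with
  | nil =>
    intro ha hks _
    simp only [SimpleGraph.Walk.support_nil, List.mem_singleton] at hks
    exact absurd (hks ▸ hk) ha.1
  | @cons a c b h p ih =>
    intro ha hks hsupp
    by_cases hck : c = k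
    · exact ⟨a, ha, hck ▸ h⟩
    · have hkp : k ∈ p.support := by
        simp only [SimpleGraph.Walk.support_cons, List.mem_cons] at hks
        rcases hks with h1 | h1
        · exact absurd (h1 ▸ hk) ha.1
        · exact h1
      have hcK : c ∉ K := by
        intro hcK'
        exact hsupp c (by simp [SimpleGraph.Walk.support_cons, p.start_mem_support])
          ⟨hcK', hck⟩
      exact ih (NR_closed ha h hcK) hkp
        (fun v hv => hsupp v (by simp [SimpleGraph.Walk.support_cons, hv]))

/-- A minimal separator equals the neighbourhood of its `NR`-side. -/
lemma minimal_eq_NSet_NR {X Y K : Set V} (hmin : IsMinimalSeparator G X Y K) :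
    K = NSet G (NR G Y K) := by
  apply Set.Subset.antisymm
  · intro k hk
    have hss : K \ {k} ⊂ K := Set.sdiff_singleton_ssubset.mpr hk
    have hns := hmin.2 _ hss
    rw [IsSeparator, not_and] at hns
    have hns' := hns (Set.diff_subset.trans hmin.1.1)
    push_neg at hns'
    obtain ⟨x, hx, y, hy, w, hw⟩ := hns'
    obtain ⟨v, hvsup, hvK⟩ := hmin.1.2 x hx y hy w
    have hvk : v = k := by
      by_contra hne
      exact hw v hvsup ⟨hvK, hne⟩
    obtain ⟨u, hu, hadj⟩ := exists_adj_in_NR hk w (X_subset_NR hmin.1 hx)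
      (hvk ▸ hvsup) hw
    exact ⟨fun h => h.1 hk, u, hu, hadj⟩
  · rintro v ⟨hvR, u, hu, hadj⟩
    exact mem_of_adj_NR hu hadj hvR

/-- Uniqueness of the important witness of a subset of `N(X)`. -/
lemma importantWitness_unique {V : Type*} [Fintype V] {G : SimpleGraph V}
    {X Y S K K' : Set V} (hS : S ⊆ NSet G X)
    (hK : IsImportantWitness G X Y S K) (hK' : IsImportantWitness G X Y S K') :
    K = K' := by
  obtain ⟨⟨sepK, disjK, exK⟩, minK, impK⟩ := hK
  obtain ⟨⟨sepK', disjK', exK'⟩, minK', impK'⟩ := hK'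
  set R := NR G Y K with hRdef
  set R' := NR G Y K' with hR'def
  have hXR : X ⊆ R := X_subset_NR sepK
  have hXR' : X ⊆ R' := X_subset_NR sepK'
  have hYR : ∀ y ∈ Y, y ∉ R := fun y hy => Y_not_mem_NR sepK.1 hy
  have hYR' : ∀ y ∈ Y, y ∉ R' := fun y hy => Y_not_mem_NR sepK'.1 hy
  set C1 := NSet G (R ∪ R') with hC1def
  set C2 := NSet G (R ∩ R') with hC2def
  -- C1 is a separator
  have sepC1 : IsSeparator G X Y C1 := by
    constructor
    · rintro v ⟨hv, u, hu, hadj⟩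
      rintro (hvX | hvY)
      · exact hv (Or.inl (hXR hvX))
      · rcases hu with hu | hu
        · exact NR_not_adj_Y sepK.1 hu hvY hadj.symm
        · exact NR_not_adj_Y sepK'.1 hu hvY hadj.symm
    · intro x hx y hy w
      exact exists_NSet_of_walk w (Or.inl (hXR hx))
        (fun h => h.elim (hYR y hy) (hYR' y hy))
  -- C2 is a separator
  have sepC2 : IsSeparator G X Y C2 := by
    constructor
    · rintro v ⟨hv, u, hu, hadj⟩
      rintro (hvX | hvY)
      · exact hv ⟨hXR hvX, hXR' hvX⟩
      · exact NR_not_adj_Y sepK.1 hu.1 hvY hadj.symm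
    · intro x hx y hy w
      exact exists_NSet_of_walk w ⟨hXR hx, hXR' hx⟩ (fun h => hYR y hy h.1)
  -- submodularity subsets
  have hC1sub : C1 ⊆ K ∪ K' := by
    rintro v ⟨hv, u, hu, hadj⟩
    rcases hu with hu | hu
    · exact Or.inl (mem_of_adj_NR hu hadj (fun h => hv (Or.inl h)))
    · exact Or.inr (mem_of_adj_NR hu hadj (fun h => hv (Or.inr h)))
  have hC2sub : C2 ⊆ K ∪ K' := by
    rintro v ⟨hv, u, hu, hadj⟩
    by_contra h
    rw [Set.mem_union] at h
    push_neg at h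
    exact hv ⟨NR_closed hu.1 hadj h.1, NR_closed hu.2 hadj h.2⟩
  have hC12 : C1 ∩ C2 ⊆ K ∩ K' := by
    rintro v ⟨⟨hv1, -⟩, ⟨-, u, hu, hadj⟩⟩
    exact ⟨mem_of_adj_NR hu.1 hadj (fun h => hv1 (Or.inl h)),
      mem_of_adj_NR hu.2 hadj (fun h => hv1 (Or.inr h))⟩
  -- cardinalities
  have hcard : C1.ncard + C2.ncard ≤ K.ncard + K'.ncard := by
    have e1 := Set.ncard_union_add_ncard_inter C1 C2 (Set.toFinite _) (Set.toFinite _)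
    have e2 := Set.ncard_union_add_ncard_inter K K' (Set.toFinite _) (Set.toFinite _)
    have l1 : (C1 ∪ C2).ncard ≤ (K ∪ K').ncard :=
      Set.ncard_le_ncard (Set.union_subset hC1sub hC2sub) (Set.toFinite _)
    have l2 : (C1 ∩ C2).ncard ≤ (K ∩ K').ncard :=
      Set.ncard_le_ncard hC12 (Set.toFinite _)
    omega
  set m := minSepSize G X Y with hm
  have hmK : m ≤ K.ncard := Nat.sInf_le ⟨K, sepK, rfl⟩
  have hmK' : m ≤ K'.ncard := Nat.sInf_le ⟨K', sepK', rfl⟩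
  have hmC2 : m ≤ C2.ncard := Nat.sInf_le ⟨C2, sepC2, rfl⟩
  have hSR : S ⊆ R := S_subset_NR sepK disjK hS
  have hSR' : S ⊆ R' := S_subset_NR sepK' disjK' hS
  have hdisjC2S : Disjoint C2 S := by
    rw [Set.disjoint_left]
    intro v hv hvS
    exact hv.1 ⟨hSR hvS, hSR' hvS⟩
  have hCE2 : CE G X Y S ≤ excess G X Y C2 := Nat.sInf_le ⟨C2, sepC2, hdisjC2S, rfl⟩
  have hexC2 : excess G X Y C2 = C2.ncard - m := rfl
  have hexKe : excess G X Y K = K.ncard - m := rfl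
  have hexK'e : excess G X Y K' = K'.ncard - m := rfl
  have hC1K : C1.ncard ≤ K.ncard := by omega
  have hC1K' : C1.ncard ≤ K'.ncard := by omega
  -- importance forces NR-equality with the boundary C1
  have hYRu : ∀ y ∈ Y, y ∉ R ∪ R' := fun y hy h => h.elim (hYR y hy) (hYR' y hy)
  have hleK : SepLE G Y K C1 := sepLE_boundary Set.subset_union_left hYRu
  have hleK' : SepLE G Y K' C1 := sepLE_boundary Set.subset_union_right hYRu
  have hNR1 : NR G Y K = NR G Y C1 := by
    by_contra hne
    exact impK ⟨C1, sepC1, ⟨hleK, hne⟩, hC1K⟩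
  have hNR2 : NR G Y K' = NR G Y C1 := by
    by_contra hne
    exact impK' ⟨C1, sepC1, ⟨hleK', hne⟩, hC1K'⟩
  calc K = NSet G (NR G Y K) := minimal_eq_NSet_NR minK
    _ = NSet G (NR G Y K') := by rw [hNR1, hNR2]
    _ = K' := (minimal_eq_NSet_NR minK').symm

lemma listUnion_cons (a : Set V) (l : List (Set V)) :
    (⋃ S ∈ (a :: l), S) = a ∪ ⋃ S ∈ l, S := by
  ext v
  simp only [Set.mem_iUnion, Set.mem_union, List.mem_cons]
  constructor
  · rintro ⟨S, (rfl | hS), hv⟩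
    · exact Or.inl hv
    · exact Or.inr ⟨S, hS, hv⟩
  · rintro (hv | ⟨S, hS, hv⟩)
    · exact ⟨a, Or.inl rfl, hv⟩
    · exact ⟨S, Or.inr hS, hv⟩

lemma head_inter {S1 N : Set V} {rest : List (Set V)} (h1 : S1 ⊆ N)
    (h2 : ∀ T ∈ rest, Disjoint T N) :
    (S1 ∪ ⋃ T ∈ rest, T) ∩ N = S1 := by
  apply Set.Subset.antisymm
  · rintro v ⟨hv | hv, hvN⟩
    · exact hv
    · rw [Set.mem_iUnion] at hv
      obtain ⟨T, hT⟩ := hv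
      rw [Set.mem_iUnion] at hT
      obtain ⟨hTl, hvT⟩ := hT
      exact absurd hvN (Set.disjoint_left.mp (h2 T hTl) hvT)
  · intro v hv
    exact ⟨Or.inl hv, h1 hv⟩

end Helpers

/-- Let `G` be an `X`–`Y` normalized graph.  If `(S1,…,Sr)`
and `(S1',…,Sq')` are both attributes of compound witnesses w.r.t. `X`, `Y` in
`G` and `S1 ∪ … ∪ Sr = S1' ∪ … ∪ Sq'`, then the two sequences coincide. -/
theorem compoundWitness_attribute_unique_of_union_eq
    {V : Type*} [Fintype V] (G : SimpleGraph V) (X Y : Set V)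
    (hXY : Disjoint X Y) (hnorm : Normalized G X Y)
    (attr1 attr2 : List (Set V))
    (hdisj1 : attr1.Pairwise (fun A B => Disjoint A B))
    (hne1 : ∀ S ∈ attr1, S.Nonempty)
    (hdisj2 : attr2.Pairwise (fun A B => Disjoint A B))
    (hne2 : ∀ S ∈ attr2, S.Nonempty)
    (K1 K2 : Set V)
    (h1 : IsCompoundWitness X Y G attr1 K1)
    (h2 : IsCompoundWitness X Y G attr2 K2)
    (hunion : (⋃ S ∈ attr1, S) = ⋃ S ∈ attr2, S) :
    attr1 = attr2 := by
  clear hXY hnorm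
  induction h1 generalizing attr2 K2 with
  | base G S1 K hne hsub hnadj himp =>
    cases h2 with
    | base _ S1' K' hne' hsub' hnadj' himp' =>
      have h : S1 = S1' := by
        have h := hunion
        rw [listUnion_cons, listUnion_cons] at h
        simpa using h
      rw [h]
    | step _ S1' rest' K' K1'' hne' hsub' hnadj' hrne' hrdisj' himp' hrest' =>
      exfalso
      obtain ⟨T, hT⟩ := List.exists_mem_of_ne_nil rest' hrne'
      obtain ⟨t, ht⟩ := hne2 T (List.mem_cons_of_mem _ hT)
      have htU : t ∈ ⋃ S ∈ (S1' :: rest'), S :=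
        Set.mem_iUnion₂.mpr ⟨T, List.mem_cons_of_mem _ hT, ht⟩
      rw [← hunion, listUnion_cons] at htU
      have htN : t ∈ NSet G X := by
        rcases htU with htU | htU
        · exact hsub htU
        · simp at htU
      exact Set.disjoint_left.mp (hrdisj' T hT) ht htN
  | step G S1 rest K K1 hne hsub hnadj hrne hrdisj himp hrest ih =>
    cases h2 with
    | base _ S1' K' hne' hsub' hnadj' himp' =>
      exfalso
      obtain ⟨T, hT⟩ := List.exists_mem_of_ne_nil rest hrne
      obtain ⟨t, ht⟩ := hne1 T (List.mem_cons_of_mem _ hT)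
      have htU : t ∈ ⋃ S ∈ (S1 :: rest), S :=
        Set.mem_iUnion₂.mpr ⟨T, List.mem_cons_of_mem _ hT, ht⟩
      rw [hunion, listUnion_cons] at htU
      have htN : t ∈ NSet G X := by
        rcases htU with htU | htU
        · exact hsub' htU
        · simp at htU
      exact Set.disjoint_left.mp (hrdisj T hT) ht htN
    | step _ S1' rest' K' K1'' hne' hsub' hnadj' hrne' hrdisj' himp' hrest' =>
      rw [listUnion_cons, listUnion_cons] at hunion
      -- the heads agree
      have hhead : S1 = S1' := by
        have e1 : (S1 ∪ ⋃ T ∈ rest, T) ∩ NSet G X = S1 := head_inter hsub hrdisj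
        have e2 : (S1' ∪ ⋃ T ∈ rest', T) ∩ NSet G X = S1' :=
          head_inter hsub' hrdisj'
        rw [← e1, ← e2, hunion]
      subst hhead
      -- the important witnesses of the (equal) heads agree
      have hKeq : K1 = K1'' := importantWitness_unique hsub himp himp'
      subst hKeq
      -- the tails have equal unions
      have hd1 : Disjoint S1 (⋃ T ∈ rest, T) := by
        rw [Set.disjoint_iUnion₂_right]
        exact fun T hT => (List.pairwise_cons.mp hdisj1).1 T hT
      have hd2 : Disjoint S1 (⋃ T ∈ rest', T) := by
        rw [Set.disjoint_iUnion₂_right]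
        exact fun T hT => (List.pairwise_cons.mp hdisj2).1 T hT
      have htail : (⋃ T ∈ rest, T) = ⋃ T ∈ rest', T := by
        have u1 : (S1 ∪ ⋃ T ∈ rest, T) \ S1 = ⋃ T ∈ rest, T :=
          Set.union_diff_cancel_left (Set.disjoint_iff.mp hd1)
        have u2 : (S1 ∪ ⋃ T ∈ rest', T) \ S1 = ⋃ T ∈ rest', T :=
          Set.union_diff_cancel_left (Set.disjoint_iff.mp hd2)
        rw [← u1, ← u2, hunion]
      have : rest = rest' := ih rest' (List.pairwise_cons.mp hdisj1).2
        (fun T hT => hne1 T (List.mem_cons_of_mem _ hT))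
        (List.pairwise_cons.mp hdisj2).2
        (fun T hT => hne2 T (List.mem_cons_of_mem _ hT))
        _ hrest' htail
      rw [this]
end
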